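/- arXiv:2411.11583 — 10 statements merged into one kernel-verified Lean document; each statement's English description precedes it below -/
import Mathlib

section
/- For every y ∈ ℝ one has 2 ≤ 𝔅(y) + 𝔅(−y) ≤ 2 + y²/6; moreover, for every y ≠ 0, 𝔅(y) + 𝔅(−y) = y·coth(y/2). -/
/-- The Bernoulli function: `𝔅(y) = y / (exp y - 1)` for `y ≠ 0`, and `𝔅(0) = 1`. -/
noncomputable def Bern (y : ℝ) : ℝ := if y = 0 then 1 else y / (Real.exp y - 1)

/-- The hyperbolic cotangent `coth x = cosh x / sinh x`. -/
noncomputable def coth (x : ℝ) : ℝ := Real.cosh x / Real.sinh x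

lemma bern_aux1 {t : ℝ} (ht : 0 ≤ t) : Real.sinh t ≤ t * Real.cosh t := by
  have hmono : MonotoneOn (fun t : ℝ => t * Real.cosh t - Real.sinh t) (Set.Ici 0) := by
    apply monotoneOn_of_deriv_nonneg (convex_Ici 0)
    · fun_prop
    · fun_prop
    · intro x hx
      have H : HasDerivAt (fun t : ℝ => t * Real.cosh t - Real.sinh t) (x * Real.sinh x) x := by
        have h1 := (hasDerivAt_id x).mul (Real.hasDerivAt_cosh x)
        have h2 := Real.hasDerivAt_sinh x
        exact (h1.sub h2).congr_deriv (by simp only [id_eq]; ring)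
      rw [H.deriv]
      rw [interior_Ici, Set.mem_Ioi] at hx
      exact mul_nonneg (le_of_lt hx) (Real.sinh_nonneg_iff.2 (le_of_lt hx))
  have := hmono Set.self_mem_Ici (Set.mem_Ici.2 ht) ht
  simp only [Real.cosh_zero, Real.sinh_zero, zero_mul, sub_zero] at this
  linarith

lemma bern_aux2 {t : ℝ} (ht : 0 ≤ t) : t * Real.cosh t ≤ (1 + t ^ 2 / 3) * Real.sinh t := by
  have hmono : MonotoneOn (fun t : ℝ => (1 + t ^ 2 / 3) * Real.sinh t - t * Real.cosh t)
      (Set.Ici 0) := by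
    apply monotoneOn_of_deriv_nonneg (convex_Ici 0)
    · fun_prop
    · fun_prop
    · intro x hx
      have H : HasDerivAt (fun t : ℝ => (1 + t ^ 2 / 3) * Real.sinh t - t * Real.cosh t)
          (x / 3 * (x * Real.cosh x - Real.sinh x)) x := by
        have h0 : HasDerivAt (fun t : ℝ => 1 + t ^ 2 / 3) (2 * x / 3) x := by
          have := ((hasDerivAt_pow 2 x).div_const 3).const_add 1
          exact this.congr_deriv (by norm_num)
        have h1 := h0.mul (Real.hasDerivAt_sinh x)
        have h2 := (hasDerivAt_id x).mul (Real.hasDerivAt_cosh x)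
        exact (h1.sub h2).congr_deriv (by simp only [id_eq]; ring)
      rw [H.deriv]
      rw [interior_Ici, Set.mem_Ioi] at hx
      have h1 := bern_aux1 (le_of_lt hx)
      exact mul_nonneg (by linarith [hx.le]) (by linarith)
  have := hmono Set.self_mem_Ici (Set.mem_Ici.2 ht) ht
  simp only [Real.cosh_zero, Real.sinh_zero, zero_mul, mul_zero, sub_zero] at this
  linarith

lemma coth_neg' (x : ℝ) : coth (-x) = - coth x := by
  simp [coth, Real.cosh_neg, Real.sinh_neg, neg_div, div_neg]

lemma bern_id {y : ℝ} (hy : y ≠ 0) : Bern y + Bern (-y) = y * coth (y / 2) := by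
  have hne := hy
  set u := Real.exp (y/2) with hu_def
  have hupos : 0 < u := Real.exp_pos _
  have hEy : Real.exp y = u ^ 2 := by
    rw [hu_def, sq, ← Real.exp_add]; ring_nf
  have hu1 : u ^ 2 ≠ 1 := by
    rw [← hEy]; exact fun h => hne ((Real.exp_eq_one_iff y).1 h)
  have hE : u ^ 2 - 1 ≠ 0 := sub_ne_zero.2 hu1
  have hE' : Real.exp (-y) - 1 ≠ 0 := by
    rw [Real.exp_neg, hEy]
    intro h
    apply hu1
    have : (u ^ 2)⁻¹ = 1 := by linarith
    field_simp at this
    linarith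
  rw [Bern, Bern, if_neg hne, if_neg (neg_ne_zero.2 hne), coth, Real.cosh_eq, Real.sinh_eq,
    Real.exp_neg (y/2), ← hu_def, Real.exp_neg y, hEy]
  have hun : u ≠ 0 := hupos.ne'
  have hsne : u - u⁻¹ ≠ 0 := by
    intro h
    apply hu1
    have : u = u⁻¹ := by linarith
    field_simp at this
    nlinarith
  have hE2 : (1:ℝ) - u ^ 2 ≠ 0 := fun h => hE (by linarith)
  have hE3 : (-1:ℝ) + u ^ 2 ≠ 0 := fun h => hE (by linarith)
  have h5 : (-1 + u ^ 2) * (-1 + u ^ 2)⁻¹ = 1 := mul_inv_cancel₀ hE3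
  field_simp [hE2, hE3]
  ring

lemma bern_key {y : ℝ} (hy : 0 < y) :
    2 ≤ Bern y + Bern (-y) ∧ Bern y + Bern (-y) ≤ 2 + y ^ 2 / 6 ∧
      (y ≠ 0 → Bern y + Bern (-y) = y * coth (y / 2)) := by
  have hne : y ≠ 0 := ne_of_gt hy
  have hsp : 0 < Real.sinh (y / 2) := Real.sinh_pos_iff.2 (by linarith)
  have hid := bern_id hne
  have hlow := bern_aux1 (by linarith : (0:ℝ) ≤ y / 2)
  have hhigh := bern_aux2 (by linarith : (0:ℝ) ≤ y / 2)
  refine ⟨?_, ?_, fun _ => hid⟩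
  · rw [hid, coth, mul_div_assoc', le_div_iff₀ hsp]
    nlinarith
  · rw [hid, coth, mul_div_assoc', div_le_iff₀ hsp]
    nlinarith

/-- For every `y ∈ ℝ`, `2 ≤ 𝔅(y) + 𝔅(−y) ≤ 2 + y²/6`; moreover for `y ≠ 0`,
`𝔅(y) + 𝔅(−y) = y·coth(y/2)`. -/
theorem bernoulli_sum_bounds (y : ℝ) :
    2 ≤ Bern y + Bern (-y) ∧ Bern y + Bern (-y) ≤ 2 + y ^ 2 / 6 ∧
      (y ≠ 0 → Bern y + Bern (-y) = y * coth (y / 2)) := by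
  rcases eq_or_ne y 0 with h | h
  · subst h
    simp only [Bern, neg_zero, if_pos rfl]
    norm_num
  rcases h.lt_or_gt with hy | hy
  · obtain ⟨h1, h2, h3⟩ := bern_key (y := -y) (by linarith)
    simp only [neg_neg] at h1 h2 h3
    have h3' := h3 (by intro hc; apply h; linarith)
    have hcoth : -y * coth (-y / 2) = y * coth (y / 2) := by
      have : (-y) / 2 = -(y / 2) := by ring
      rw [this, coth_neg']
      ring
    refine ⟨by linarith, by nlinarith, fun _ => by linarith [h3', hcoth]⟩
  · exact bern_key hy
end

section
/- Let z, φ_K, φ_L, u_K, u_L ∈ ℝ and v_K, v_L > 0, and set w_K = (u_K/v_K)·exp(z·φ_K) and w_L = (u_L/v_L)·exp(z·φ_L). Then u_K·v_L·𝔅(z(φ_L − φ_K)) − u_L·v_K·𝔅(z(φ_K − φ_L)) = v_K·v_L·𝔐(exp(−z·φ_K), exp(−z·φ_L))·(w_K − w_L). -/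
/-- The mean `𝔐(p,q) = (log(1/p) − log(1/q))/(1/p − 1/q)` for `p ≠ q`, `𝔐(p,p) = p`. -/
noncomputable def Mmean (p q : ℝ) : ℝ :=
  if p = q then p else (Real.log (1 / p) - Real.log (1 / q)) / (1 / p - 1 / q)

/-- Reformulation of the discrete flux in terms of the Slotboom variables
`w_K = (u_K/v_K)·exp(z·φ_K)` and `w_L = (u_L/v_L)·exp(z·φ_L)`. -/
theorem flux_slotboom_reformulation (z φK φL uK uL vK vL : ℝ)
    (hvK : 0 < vK) (hvL : 0 < vL) (wK wL : ℝ)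
    (hwK : wK = uK / vK * Real.exp (z * φK)) (hwL : wL = uL / vL * Real.exp (z * φL)) :
    uK * vL * Bern (z * (φL - φK)) - uL * vK * Bern (z * (φK - φL)) =
      vK * vL * Mmean (Real.exp (-(z * φK))) (Real.exp (-(z * φL))) * (wK - wL) := by
  set a := z * φK with ha
  set b := z * φL with hb
  have hLK : z * (φL - φK) = b - a := by ring
  have hKL : z * (φK - φL) = a - b := by ring
  subst hwK hwL
  rw [hLK, hKL]
  by_cases hab : a = b
  · rw [hab]
    simp only [sub_self, Bern, if_pos rfl, Mmean, if_pos rfl]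
    rw [Real.exp_neg]
    field_simp
    simp [Real.exp_ne_zero]
  · have h1 : b - a ≠ 0 := sub_ne_zero.mpr (Ne.symm hab)
    have h2 : a - b ≠ 0 := sub_ne_zero.mpr hab
    have hexp : Real.exp a ≠ Real.exp b := fun h => hab (Real.exp_injective h)
    have hexpne : Real.exp (-a) ≠ Real.exp (-b) := by
      simpa [Real.exp_neg] using fun h =>
        hexp (by rw [← inv_inv (Real.exp a), ← Real.exp_neg, h, Real.exp_neg, inv_inv])
    rw [Bern, if_neg h1, Bern, if_neg h2, Mmean, if_neg hexpne]
    have hlog : ∀ x : ℝ, Real.log (1 / Real.exp (-x)) = x := by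
      intro x
      rw [one_div, Real.exp_neg, inv_inv, Real.log_exp]
    rw [hlog, hlog]
    have e1 : Real.exp (b - a) - 1 = (Real.exp b - Real.exp a) / Real.exp a := by
      rw [Real.exp_sub]; field_simp
    have e2 : Real.exp (a - b) - 1 = (Real.exp a - Real.exp b) / Real.exp b := by
      rw [Real.exp_sub]; field_simp
    rw [e1, e2, Real.exp_neg, Real.exp_neg]
    have hsub : Real.exp b - Real.exp a ≠ 0 := sub_ne_zero.mpr (Ne.symm hexp)
    have hsub' : Real.exp a - Real.exp b ≠ 0 := sub_ne_zero.mpr hexp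
    have hpa := Real.exp_ne_zero a
    have hpb := Real.exp_ne_zero b
    field_simp
    ring
end

section
/- Let u_K, u_L, v_K, v_L > 0, z, φ_K, φ_L ∈ ℝ, and a > 0, D > 0. Set F = a·D·(u_K·v_L·𝔅(z(φ_L − φ_K)) − u_L·v_K·𝔅(z(φ_K − φ_L))), μ_K = log(u_K/v_K) + z·φ_K and μ_L = log(u_L/v_L) + z·φ_L. Then F·(μ_K − μ_L) ≥ 0, with equality if and only if μ_K = μ_L. -/
lemma Bern_pos (y : ℝ) : 0 < Bern y := by
  unfold Bern
  rcases eq_or_ne y 0 with h | h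
  · simp [h]
  · simp only [h, if_false]
    rcases lt_or_gt_of_ne h with hy | hy
    · have : Real.exp y - 1 < 0 := by
        have := Real.exp_lt_one_iff.mpr hy; linarith
      exact div_pos_of_neg_of_neg hy this
    · have : 0 < Real.exp y - 1 := by
        have h1 : 1 < Real.exp y := Real.one_lt_exp_iff.mpr hy
        linarith
      exact div_pos hy this

lemma Bern_neg_eq (y : ℝ) : Bern (-y) = Real.exp y * Bern y := by
  rcases eq_or_ne y 0 with h | h
  · simp [h, Bern]
  · have h' : (-y) ≠ 0 := neg_ne_zero.mpr h
    have he : Real.exp y ≠ 1 := by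
      intro hc
      exact h (Real.exp_injective (by rwa [Real.exp_zero]))
    have he0 : Real.exp y ≠ 0 := (Real.exp_pos y).ne'
    unfold Bern
    simp only [h, h', if_false]
    rw [Real.exp_neg]
    have hne : 1 - Real.exp y ≠ 0 := sub_ne_zero.mpr (Ne.symm he)
    have hne2 : Real.exp y - 1 ≠ 0 := sub_ne_zero.mpr he
    field_simp
    ring

lemma monotone_prod (x y : ℝ) (hx : 0 < x) (hy : 0 < y) :
    0 ≤ (x - y) * (Real.log x - Real.log y) ∧
      ((x - y) * (Real.log x - Real.log y) = 0 ↔ x = y) := by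
  rcases lt_trichotomy x y with h | h | h
  · have hl : Real.log x < Real.log y := Real.log_lt_log hx h
    constructor
    · nlinarith
    · constructor
      · intro hz; nlinarith
      · intro hz; linarith
  · simp [h]
  · have hl : Real.log y < Real.log x := Real.log_lt_log hy h
    constructor
    · nlinarith
    · constructor
      · intro hz; nlinarith
      · intro hz; linarith

/-- The edge dissipation `F·(μ_K − μ_L)` is nonnegative, and vanishes iff `μ_K = μ_L`. -/
theorem flux_dissipation_nonneg (z φK φL uK uL vK vL a D : ℝ)
    (huK : 0 < uK) (huL : 0 < uL) (hvK : 0 < vK) (hvL : 0 < vL)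
    (ha : 0 < a) (hD : 0 < D) (F μK μL : ℝ)
    (hF : F = a * D * (uK * vL * Bern (z * (φL - φK)) - uL * vK * Bern (z * (φK - φL))))
    (hμK : μK = Real.log (uK / vK) + z * φK)
    (hμL : μL = Real.log (uL / vL) + z * φL) :
    0 ≤ F * (μK - μL) ∧ (F * (μK - μL) = 0 ↔ μK = μL) := by
  set s := z * (φL - φK) with hs
  have hneg : z * (φK - φL) = -s := by rw [hs]; ring
  set x := uK * vL with hxdef
  set y := uL * vK * Real.exp s with hydef
  have hx : 0 < x := mul_pos huK hvL
  have hy : 0 < y := mul_pos (mul_pos huL hvK) (Real.exp_pos s)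
  have hFeq : F = a * D * Bern s * (x - y) := by
    rw [hF, hneg, Bern_neg_eq]; ring
  have hμ : μK - μL = Real.log x - Real.log y := by
    rw [hμK, hμL, hxdef, hydef,
      Real.log_div huK.ne' hvK.ne', Real.log_div huL.ne' hvL.ne',
      Real.log_mul huK.ne' hvL.ne',
      Real.log_mul (mul_pos huL hvK).ne' (Real.exp_pos s).ne',
      Real.log_mul huL.ne' hvK.ne', Real.log_exp, hs]
    ring
  obtain ⟨h1, h2⟩ := monotone_prod x y hx hy
  have hC : 0 < a * D * Bern s := mul_pos (mul_pos ha hD) (Bern_pos s)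
  have key : F * (μK - μL) = (a * D * Bern s) * ((x - y) * (Real.log x - Real.log y)) := by
    rw [hFeq, hμ]; ring
  constructor
  · rw [key]; positivity
  · rw [key]
    constructor
    · intro h
      have : (x - y) * (Real.log x - Real.log y) = 0 := by
        rcases mul_eq_zero.mp h with h' | h'
        · exact absurd h' hC.ne'
        · exact h'
      have hxy := h2.mp this
      have : μK - μL = 0 := by rw [hμ, hxy]; ring
      linarith
    · intro h
      have : x = y := by
        have hl : Real.log x = Real.log y := by
          have : μK - μL = 0 := by rw [h]; ring
          rw [hμ] at this; linarith
        exact Real.log_injOn_pos (Set.mem_Ioi.mpr hx) (Set.mem_Ioi.mpr hy) hl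
      rw [h2.mpr this]; ring
end

section
/- For every integer I ≥ 1, the function H* : ℝ^I → ℝ defined by H*(r_1,…,r_I) = log(1 + Σ_{i=1}^I exp(r_i)) is strictly convex. -/
open Real Finset

/-- Non-strict two-point bound from convexity of `exp`. -/
lemma exp_comb_le (a b u v : ℝ) (ha : 0 ≤ a) (hb : 0 ≤ b) (hab : a + b = 1) :
    Real.exp (a * u + b * v) ≤ a * Real.exp u + b * Real.exp v := by
  have := convexOn_exp.2 (Set.mem_univ u) (Set.mem_univ v) ha hb hab
  simpa using this

/-- Strict two-point bound from strict convexity of `exp`. -/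
lemma exp_comb_lt (a b u v : ℝ) (huv : u ≠ v) (ha : 0 < a) (hb : 0 < b)
    (hab : a + b = 1) :
    Real.exp (a * u + b * v) < a * Real.exp u + b * Real.exp v := by
  have := strictConvexOn_exp.2 (Set.mem_univ u) (Set.mem_univ v) huv ha hb hab
  simpa using this

/-- Normalized (Hölder-type) non-strict bound. -/
lemma aux_le (a b A B u v : ℝ) (ha : 0 ≤ a) (hb : 0 ≤ b) (hab : a + b = 1)
    (hA : 0 < A) (hB : 0 < B) :
    Real.exp (a * u + b * v)
      ≤ Real.exp (a * Real.log A + b * Real.log B)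
        * (a * (Real.exp u / A) + b * (Real.exp v / B)) := by
  have h := exp_comb_le a b (u - Real.log A) (v - Real.log B) ha hb hab
  have e1 : Real.exp (u - Real.log A) = Real.exp u / A := by
    rw [Real.exp_sub, Real.exp_log hA]
  have e2 : Real.exp (v - Real.log B) = Real.exp v / B := by
    rw [Real.exp_sub, Real.exp_log hB]
  have h2 := mul_le_mul_of_nonneg_left h
    (Real.exp_pos (a * Real.log A + b * Real.log B)).le
  rw [e1, e2] at h2
  calc Real.exp (a * u + b * v)
      = Real.exp (a * Real.log A + b * Real.log B)
        * Real.exp (a * (u - Real.log A) + b * (v - Real.log B)) := by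
        rw [← Real.exp_add]; congr 1; ring
    _ ≤ _ := h2

/-- Normalized (Hölder-type) strict bound. -/
lemma aux_lt (a b A B u v : ℝ) (huv : u - Real.log A ≠ v - Real.log B)
    (ha : 0 < a) (hb : 0 < b) (hab : a + b = 1) (hA : 0 < A) (hB : 0 < B) :
    Real.exp (a * u + b * v)
      < Real.exp (a * Real.log A + b * Real.log B)
        * (a * (Real.exp u / A) + b * (Real.exp v / B)) := by
  have h := exp_comb_lt a b (u - Real.log A) (v - Real.log B) huv ha hb hab
  have e1 : Real.exp (u - Real.log A) = Real.exp u / A := by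
    rw [Real.exp_sub, Real.exp_log hA]
  have e2 : Real.exp (v - Real.log B) = Real.exp v / B := by
    rw [Real.exp_sub, Real.exp_log hB]
  have h2 := mul_lt_mul_of_pos_left h
    (Real.exp_pos (a * Real.log A + b * Real.log B))
  rw [e1, e2] at h2
  calc Real.exp (a * u + b * v)
      = Real.exp (a * Real.log A + b * Real.log B)
        * Real.exp (a * (u - Real.log A) + b * (v - Real.log B)) := by
        rw [← Real.exp_add]; congr 1; ring
    _ < _ := h2

/-- For every integer `I ≥ 1`, the function
`H*(r₁,…,r_I) = log(1 + Σᵢ exp rᵢ)` is strictly convex on `ℝ^I`. -/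
theorem legendre_entropy_strictConvex (I : ℕ) (hI : 1 ≤ I) :
    StrictConvexOn ℝ Set.univ
      (fun R : Fin I → ℝ => Real.log (1 + ∑ i, Real.exp (R i))) := by
  refine ⟨convex_univ, fun x _ y _ hxy a b ha hb hab => ?_⟩
  set A : ℝ := 1 + ∑ i, Real.exp (x i) with hA
  set B : ℝ := 1 + ∑ i, Real.exp (y i) with hB
  have hSx : 0 ≤ ∑ i, Real.exp (x i) :=
    Finset.sum_nonneg fun i _ => (Real.exp_pos _).le
  have hSy : 0 ≤ ∑ i, Real.exp (y i) :=
    Finset.sum_nonneg fun i _ => (Real.exp_pos _).le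
  have hApos : 0 < A := by positivity
  have hBpos : 0 < B := by positivity
  set E : ℝ := Real.exp (a * Real.log A + b * Real.log B) with hE
  have hEpos : 0 < E := Real.exp_pos _
  -- per-coordinate non-strict bound
  have key : ∀ i : Fin I,
      Real.exp (a * x i + b * y i)
        ≤ E * (a * (Real.exp (x i) / A) + b * (Real.exp (y i) / B)) :=
    fun i => aux_le a b A B (x i) (y i) ha.le hb.le hab hApos hBpos
  -- the "1" term, non-strict
  have key1 : (1 : ℝ) ≤ E * (a * (1 / A) + b * (1 / B)) := by
    have h := aux_le a b A B 0 0 ha.le hb.le hab hApos hBpos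
    simpa using h
  -- total identity
  have total : E * (a * (1 / A) + b * (1 / B))
      + ∑ i, E * (a * (Real.exp (x i) / A) + b * (Real.exp (y i) / B)) = E := by
    have hsum : ∑ i, E * (a * (Real.exp (x i) / A) + b * (Real.exp (y i) / B))
        = E * a / A * (∑ i, Real.exp (x i)) + E * b / B * (∑ i, Real.exp (y i)) := by
      rw [Finset.mul_sum, Finset.mul_sum, ← Finset.sum_add_distrib]
      exact Finset.sum_congr rfl fun i _ => by ring
    rw [hsum]
    have hx' : (∑ i, Real.exp (x i)) = A - 1 := by rw [hA]; ring
    have hy' : (∑ i, Real.exp (y i)) = B - 1 := by rw [hB]; ring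
    rw [hx', hy']
    field_simp
    linear_combination (A * B) * hab
  -- main strict inequality
  have main : 1 + ∑ i, Real.exp (a * x i + b * y i) < E := by
    by_cases hAB : A = B
    · -- strictness comes from a coordinate where x and y differ
      obtain ⟨j, hj⟩ := Function.ne_iff.1 hxy
      have hstrict : Real.exp (a * x j + b * y j)
          < E * (a * (Real.exp (x j) / A) + b * (Real.exp (y j) / B)) := by
        refine aux_lt a b A B (x j) (y j) ?_ ha hb hab hApos hBpos
        rw [hAB]
        intro hcon
        exact hj (by linarith [sub_left_injective.eq_iff.1 hcon])
      have hsumlt : ∑ i, Real.exp (a * x i + b * y i)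
          < ∑ i, E * (a * (Real.exp (x i) / A) + b * (Real.exp (y i) / B)) :=
        Finset.sum_lt_sum (fun i _ => key i) ⟨j, Finset.mem_univ j, hstrict⟩
      calc 1 + ∑ i, Real.exp (a * x i + b * y i)
          < E * (a * (1 / A) + b * (1 / B))
            + ∑ i, E * (a * (Real.exp (x i) / A) + b * (Real.exp (y i) / B)) :=
            add_lt_add_of_le_of_lt key1 hsumlt
        _ = E := total
    · -- strictness comes from the "1" term
      have hstrict1 : (1 : ℝ) < E * (a * (1 / A) + b * (1 / B)) := by
        have h := aux_lt a b A B 0 0 ?_ ha hb hab hApos hBpos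
        · simpa using h
        · simp only [zero_sub, ne_eq, neg_inj]
          intro hcon
          exact hAB (Real.log_injOn_pos.eq_iff (Set.mem_Ioi.2 hApos)
            (Set.mem_Ioi.2 hBpos) |>.1 hcon)
      have hsumle : ∑ i, Real.exp (a * x i + b * y i)
          ≤ ∑ i, E * (a * (Real.exp (x i) / A) + b * (Real.exp (y i) / B)) :=
        Finset.sum_le_sum fun i _ => key i
      calc 1 + ∑ i, Real.exp (a * x i + b * y i)
          < E * (a * (1 / A) + b * (1 / B))
            + ∑ i, E * (a * (Real.exp (x i) / A) + b * (Real.exp (y i) / B)) :=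
            add_lt_add_of_lt_of_le hstrict1 hsumle
        _ = E := total
  -- take logarithms
  have hpos : 0 < 1 + ∑ i, Real.exp (a * x i + b * y i) := by positivity
  have hlog := Real.log_lt_log hpos main
  rw [hE, Real.log_exp] at hlog
  simpa [Pi.add_apply, Pi.smul_apply, smul_eq_mul, hA, hB] using hlog
end

section
/- Let I ≥ 1 and let (a_i)_{0≤i≤I} and (b_i)_{0≤i≤I} be nonnegative real numbers with Σ_{i=0}^I a_i = 1 and Σ_{i=0}^I b_i = 1. Then Σ_{i=1}^I (√(a_i·a_0) − √(b_i·b_0))² ≥ (√a_0 − √b_0)² − (a_0 − b_0)². -/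
open Real Finset

/-- If `(aᵢ)` and `(bᵢ)`, `0 ≤ i ≤ I`, are nonnegative with unit sums, then
`Σ_{i=1}^I (√(aᵢ·a₀) − √(bᵢ·b₀))² ≥ (√a₀ − √b₀)² − (a₀ − b₀)²`. -/
theorem sqrt_sum_lower_bound (I : ℕ) (hI : 1 ≤ I) (a b : ℕ → ℝ)
    (ha : ∀ i ≤ I, 0 ≤ a i) (hb : ∀ i ≤ I, 0 ≤ b i)
    (hsa : ∑ i ∈ Finset.range (I + 1), a i = 1)
    (hsb : ∑ i ∈ Finset.range (I + 1), b i = 1) :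
    (Real.sqrt (a 0) - Real.sqrt (b 0)) ^ 2 - (a 0 - b 0) ^ 2 ≤
      ∑ i ∈ Finset.Icc 1 I, (Real.sqrt (a i * a 0) - Real.sqrt (b i * b 0)) ^ 2 := by
  have h01 : Finset.range (I + 1) = insert 0 (Finset.Icc 1 I) := by
    ext x; simp [Nat.lt_succ_iff]; omega
  have hn0 : (0 : ℕ) ∉ Finset.Icc 1 I := by simp
  have hsa' : ∑ i ∈ Finset.Icc 1 I, a i = 1 - a 0 := by
    rw [h01, Finset.sum_insert hn0] at hsa; linarith
  have hsb' : ∑ i ∈ Finset.Icc 1 I, b i = 1 - b 0 := by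
    rw [h01, Finset.sum_insert hn0] at hsb; linarith
  have hx : 0 ≤ a 0 := ha 0 (by omega)
  have hy : 0 ≤ b 0 := hb 0 (by omega)
  have hmem : ∀ i ∈ Finset.Icc 1 I, 0 ≤ a i ∧ 0 ≤ b i := by
    intro i hi
    simp only [Finset.mem_Icc] at hi
    exact ⟨ha i hi.2, hb i hi.2⟩
  have hx1 : a 0 ≤ 1 := by
    have : 0 ≤ ∑ i ∈ Finset.Icc 1 I, a i :=
      Finset.sum_nonneg fun i hi => (hmem i hi).1
    linarith
  have hy1 : b 0 ≤ 1 := by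
    have : 0 ≤ ∑ i ∈ Finset.Icc 1 I, b i :=
      Finset.sum_nonneg fun i hi => (hmem i hi).2
    linarith
  -- expand each summand
  have key : ∀ i ∈ Finset.Icc 1 I,
      (Real.sqrt (a i * a 0) - Real.sqrt (b i * b 0)) ^ 2
        = a i * a 0 + b i * b 0
          - 2 * (Real.sqrt (a i) * Real.sqrt (b i) * Real.sqrt (a 0 * b 0)) := by
    intro i hi
    obtain ⟨hai, hbi⟩ := hmem i hi
    have e1 : Real.sqrt (a i * a 0) * Real.sqrt (b i * b 0)
        = Real.sqrt (a i) * Real.sqrt (b i) * Real.sqrt (a 0 * b 0) := by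
      rw [Real.sqrt_mul hai, Real.sqrt_mul hbi, Real.sqrt_mul hx]
      ring
    have e2 : Real.sqrt (a i * a 0) ^ 2 = a i * a 0 := Real.sq_sqrt (mul_nonneg hai hx)
    have e3 : Real.sqrt (b i * b 0) ^ 2 = b i * b 0 := Real.sq_sqrt (mul_nonneg hbi hy)
    nlinarith [e1, e2, e3]
  rw [Finset.sum_congr rfl key]
  rw [Finset.sum_sub_distrib, Finset.sum_add_distrib, ← Finset.sum_mul, ← Finset.sum_mul,
    ← Finset.mul_sum, ← Finset.sum_mul, hsa', hsb']
  -- Cauchy-Schwarz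
  set S := ∑ i ∈ Finset.Icc 1 I, Real.sqrt (a i) * Real.sqrt (b i) with hS
  have hScs : S ≤ Real.sqrt (1 - a 0) * Real.sqrt (1 - b 0) := by
    have h := Real.sum_mul_le_sqrt_mul_sqrt (Finset.Icc 1 I)
      (fun i => Real.sqrt (a i)) (fun i => Real.sqrt (b i))
    have ea : ∑ i ∈ Finset.Icc 1 I, Real.sqrt (a i) ^ 2 = 1 - a 0 := by
      rw [← hsa']; exact Finset.sum_congr rfl fun i hi => Real.sq_sqrt (hmem i hi).1
    have eb : ∑ i ∈ Finset.Icc 1 I, Real.sqrt (b i) ^ 2 = 1 - b 0 := by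
      rw [← hsb']; exact Finset.sum_congr rfl fun i hi => Real.sq_sqrt (hmem i hi).2
    rwa [ea, eb] at h
  set u := Real.sqrt (a 0 * b 0) with hu
  set v := Real.sqrt (1 - a 0) * Real.sqrt (1 - b 0) with hv
  have hu0 : 0 ≤ u := Real.sqrt_nonneg _
  have hv0 : 0 ≤ v := mul_nonneg (Real.sqrt_nonneg _) (Real.sqrt_nonneg _)
  have hu2 : u ^ 2 = a 0 * b 0 := Real.sq_sqrt (mul_nonneg hx hy)
  have hv2 : v ^ 2 = (1 - a 0) * (1 - b 0) := by
    rw [hv, mul_pow, Real.sq_sqrt (by linarith), Real.sq_sqrt (by linarith)]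
  have hu' : 2 * u ≤ a 0 + b 0 := by nlinarith [sq_nonneg (Real.sqrt (a 0) - Real.sqrt (b 0)), Real.sq_sqrt hx, Real.sq_sqrt hy, Real.sqrt_mul hx (b 0)]
  have hv' : 2 * v ≤ (1 - a 0) + (1 - b 0) := by nlinarith [sq_nonneg (Real.sqrt (1 - a 0) - Real.sqrt (1 - b 0)), Real.sq_sqrt (show (0:ℝ) ≤ 1 - a 0 by linarith), Real.sq_sqrt (show (0:ℝ) ≤ 1 - b 0 by linarith)]
  have hsq : (Real.sqrt (a 0) - Real.sqrt (b 0)) ^ 2 = a 0 + b 0 - 2 * u := by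
    have := Real.sqrt_mul hx (b 0)
    nlinarith [Real.sq_sqrt hx, Real.sq_sqrt hy]
  rw [hsq]
  nlinarith [mul_nonneg hu0 (show (0:ℝ) ≤ 1 - v - u by linarith),
    mul_nonneg hu0 (sub_nonneg.2 hScs)]
end

section
/- For all real numbers a, c ∈ [0,1] and b, d ≥ 0, (a·√b − c·√d)² ≤ 3·((√(a·b) − √(c·d))² + (√b − √d)² + (√(a·d) − √(b·c))²). -/
set_option maxHeartbeats 1000000 in
/-- For `a, c ∈ [0,1]` and `b, d ≥ 0`:
`(a·√b − c·√d)² ≤ 3·((√(a·b) − √(c·d))² + (√b − √d)² + (√(a·d) − √(b·c))²)`. -/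
theorem three_term_sqrt_bound (a b c d : ℝ)
    (ha0 : 0 ≤ a) (ha1 : a ≤ 1) (hc0 : 0 ≤ c) (hc1 : c ≤ 1)
    (hb : 0 ≤ b) (hd : 0 ≤ d) :
    (a * Real.sqrt b - c * Real.sqrt d) ^ 2 ≤
      3 * ((Real.sqrt (a * b) - Real.sqrt (c * d)) ^ 2 +
        (Real.sqrt b - Real.sqrt d) ^ 2 +
        (Real.sqrt (a * d) - Real.sqrt (b * c)) ^ 2) := by
  set p := Real.sqrt a with hpdef
  set q := Real.sqrt b with hqdef
  set r := Real.sqrt c with hrdef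
  set s := Real.sqrt d with hsdef
  have hp0 : 0 ≤ p := Real.sqrt_nonneg a
  have hq0 : 0 ≤ q := Real.sqrt_nonneg b
  have hr0 : 0 ≤ r := Real.sqrt_nonneg c
  have hs0 : 0 ≤ s := Real.sqrt_nonneg d
  have hp1 : p ≤ 1 := Real.sqrt_le_one.mpr ha1
  have hr1 : r ≤ 1 := Real.sqrt_le_one.mpr hc1
  have hpa : p ^ 2 = a := Real.sq_sqrt ha0
  have hqb : q ^ 2 = b := Real.sq_sqrt hb
  have hrc : r ^ 2 = c := Real.sq_sqrt hc0
  have hsd : s ^ 2 = d := Real.sq_sqrt hd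
  have h1 : Real.sqrt (a * b) = p * q := Real.sqrt_mul ha0 b
  have h2 : Real.sqrt (c * d) = r * s := Real.sqrt_mul hc0 d
  have h3 : Real.sqrt (a * d) = p * s := Real.sqrt_mul ha0 d
  have h4 : Real.sqrt (b * c) = q * r := Real.sqrt_mul hb c
  rw [h1, h2, h3, h4, ← hpa, ← hrc]
  set x := p * q - r * s
  set y := q - s
  set z := p * s - q * r
  have hid : p ^ 2 * q - r ^ 2 * s = p * x + r ^ 2 * y + r * z := by
    simp only [x, y, z]; ring
  have hS : 0 ≤ x ^ 2 + y ^ 2 + z ^ 2 := by positivity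
  have hcoef : p ^ 2 + r ^ 4 + r ^ 2 ≤ 3 := by nlinarith
  have hkey : (p * x + r ^ 2 * y + r * z) ^ 2 ≤ (p ^ 2 + r ^ 4 + r ^ 2) * (x ^ 2 + y ^ 2 + z ^ 2) := by
    nlinarith [sq_nonneg (p * y - r ^ 2 * x), sq_nonneg (p * z - r * x), sq_nonneg (r ^ 2 * z - r * y)]
  calc (p ^ 2 * q - r ^ 2 * s) ^ 2 = (p * x + r ^ 2 * y + r * z) ^ 2 := by rw [hid]
    _ ≤ (p ^ 2 + r ^ 4 + r ^ 2) * (x ^ 2 + y ^ 2 + z ^ 2) := hkey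
    _ ≤ 3 * (x ^ 2 + y ^ 2 + z ^ 2) := by nlinarith
end

section
/- Let u^{n−1} and u^n be families of volume fractions (u^{n−1}_i, u^n_i : 𝒯 → ℝ for 1 ≤ i ≤ I) and φ : 𝒯 → ℝ a potential such that for every species 1 ≤ i ≤ I and every cell K ∈ 𝒯, m_K·(u^n_i(K) − u^{n−1}_i(K)) + τ·Σ_{L∈𝒯} F^n_i(K,L) = 0, where F^n_i is the discrete flux associated with u^n and φ. Then for every 0 ≤ i ≤ I one has Σ_{K∈𝒯} m_K·u^n_i(K) = Σ_{K∈𝒯} m_K·u^{n−1}_i(K), where u^n_0 := 1 − Σ_{i=1}^I u^n_i and u^{n−1}_0 := 1 − Σ_{i=1}^I u^{n−1}_i. -/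
/-- Discrete mass conservation: if the backward Euler finite volume scheme
`m_K·(uⁿᵢ(K) − uⁿ⁻¹ᵢ(K)) + τ·Σ_L Fⁿᵢ(K,L) = 0` holds, then the total mass
`Σ_K m_K·uⁿᵢ(K)` of every species `0 ≤ i ≤ I` (including the solvent
`u₀ = 1 − Σᵢ uᵢ`) is conserved. -/
theorem discrete_mass_conservation
    (T : Type*) [Fintype T] [Nonempty T]
    (m : T → ℝ) (hm : ∀ K, 0 < m K)
    (a : T → T → ℝ) (hsym : ∀ K L, a K L = a L K)
    (hnn : ∀ K L, 0 ≤ a K L) (hdiag : ∀ K, a K K = 0)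
    (I : ℕ) (hI : 1 ≤ I) (D z : Fin I → ℝ) (hD : ∀ i, 0 < D i)
    (τ : ℝ) (hτ : 0 < τ)
    (up un : Fin I → T → ℝ) (φ : T → ℝ)
    (F : Fin I → T → T → ℝ)
    (hF : ∀ i K L, F i K L = a K L * D i *
      (un i K * (1 - ∑ j, un j L) * Bern (z i * (φ L - φ K)) -
        un i L * (1 - ∑ j, un j K) * Bern (z i * (φ K - φ L))))
    (hscheme : ∀ i K, m K * (un i K - up i K) + τ * ∑ L, F i K L = 0) :
    (∀ i, ∑ K, m K * un i K = ∑ K, m K * up i K) ∧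
    ∑ K, m K * (1 - ∑ i, un i K) = ∑ K, m K * (1 - ∑ i, up i K) := by
  have hanti : ∀ i K L, F i K L = - F i L K := by
    intro i K L
    rw [hF, hF, hsym K L]
    ring
  have hdouble : ∀ i, ∑ K, ∑ L, F i K L = 0 := by
    intro i
    have h := Finset.sum_comm (s := Finset.univ) (t := Finset.univ)
      (f := fun K L => F i K L)
    have : ∑ K, ∑ L, F i K L = - ∑ K, ∑ L, F i K L := by
      nth_rewrite 1 [h]
      rw [← Finset.sum_neg_distrib]
      congr 1; ext L
      rw [← Finset.sum_neg_distrib]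
      congr 1; ext K
      exact hanti i K L
    linarith
  have hmain : ∀ i, ∑ K, m K * un i K = ∑ K, m K * up i K := by
    intro i
    have h := fun K => hscheme i K
    have hsum : ∑ K, (m K * (un i K - up i K) + τ * ∑ L, F i K L) = 0 := by
      simp [h]
    rw [Finset.sum_add_distrib, ← Finset.mul_sum, hdouble i, mul_zero, add_zero] at hsum
    have : ∑ K, m K * (un i K - up i K)
        = ∑ K, m K * un i K - ∑ K, m K * up i K := by
      rw [← Finset.sum_sub_distrib]; congr 1; ext K; ring
    linarith [this ▸ hsum]
  refine ⟨hmain, ?_⟩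
  have h1 : ∀ K, m K * (1 - ∑ i, un i K) = m K - ∑ i, m K * un i K := by
    intro K; rw [mul_sub, mul_one, Finset.mul_sum]
  have h2 : ∀ K, m K * (1 - ∑ i, up i K) = m K - ∑ i, m K * up i K := by
    intro K; rw [mul_sub, mul_one, Finset.mul_sum]
  simp only [h1, h2, Finset.sum_sub_distrib]
  rw [Finset.sum_comm (f := fun K i => m K * un i K),
    Finset.sum_comm (f := fun K i => m K * up i K)]
  congr 1
  exact Finset.sum_congr rfl fun i _ => hmain i
end

section
/- Assume the graph on 𝒯 with edge set {(K,L) : a(K,L) > 0} is connected. Let u^{n−1}_i : 𝒯 → ℝ (1 ≤ i ≤ I) satisfy u^{n−1}_i(K) ≥ 0 and Σ_{i=1}^I u^{n−1}_i(K) ≤ 1 for all K, and Σ_{K} m_K·u^{n−1}_i(K) > 0 for every 0 ≤ i ≤ I, where u^{n−1}_0 := 1 − Σ_{i=1}^I u^{n−1}_i. Let φ : 𝒯 → ℝ and u^n_i : 𝒯 → ℝ (1 ≤ i ≤ I) satisfy, for all 1 ≤ i ≤ I and all K ∈ 𝒯, m_K·(u^n_i(K) − u^{n−1}_i(K)) +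 τ·Σ_{L} a(K,L)·D_i·((u^n_i(K))⁺·(u^n_0(L))⁺·𝔅(z_i(φ(L)−φ(K))) − (u^n_i(L))⁺·(u^n_0(K))⁺·𝔅(z_i(φ(K)−φ(L)))) = 0, where u^n_0 := 1 − Σ_{i=1}^I u^n_i and x⁺ = max(x,0). Then u^n_i(K) > 0 for every 0 ≤ i ≤ I and every K ∈ 𝒯. -/
/-- Positivity of the volume fractions for the modified scheme with positive
parts in the fluxes, assuming the connectivity of the mesh graph, admissibility
of the previous iterate, and positivity of all the total masses. -/
theorem discrete_positivity
    (T : Type*) [Fintype T] [Nonempty T]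
    (m : T → ℝ) (hm : ∀ K, 0 < m K)
    (a : T → T → ℝ) (hsym : ∀ K L, a K L = a L K)
    (hnn : ∀ K L, 0 ≤ a K L) (hdiag : ∀ K, a K K = 0)
    (hconn : ∀ K L : T, Relation.ReflTransGen (fun K L => 0 < a K L) K L)
    (I : ℕ) (hI : 1 ≤ I) (D z : Fin I → ℝ) (hD : ∀ i, 0 < D i)
    (τ : ℝ) (hτ : 0 < τ)
    (up : Fin I → T → ℝ)
    (hup_nn : ∀ i K, 0 ≤ up i K) (hup_sum : ∀ K, ∑ i, up i K ≤ 1)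
    (hup_mass : ∀ i, 0 < ∑ K, m K * up i K)
    (hup_mass0 : 0 < ∑ K, m K * (1 - ∑ i, up i K))
    (un : Fin I → T → ℝ) (φ : T → ℝ)
    (hscheme : ∀ i K, m K * (un i K - up i K) +
      τ * ∑ L, a K L * D i *
        (max (un i K) 0 * max (1 - ∑ j, un j L) 0 * Bern (z i * (φ L - φ K)) -
          max (un i L) 0 * max (1 - ∑ j, un j K) 0 * Bern (z i * (φ K - φ L))) = 0) :
    (∀ i K, 0 < un i K) ∧ (∀ K, 0 < 1 - ∑ i, un i K) := by
  -- Step A: nonnegativity of un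
  have hA : ∀ i K, 0 ≤ un i K := by
    intro i K
    by_contra h
    push_neg at h
    have hmax : max (un i K) 0 = 0 := max_eq_right h.le
    have heq := hscheme i K
    simp only [hmax] at heq
    have hsle : ∑ L, a K L * D i *
        (0 * max (1 - ∑ j, un j L) 0 * Bern (z i * (φ L - φ K)) -
          max (un i L) 0 * max (1 - ∑ j, un j K) 0 * Bern (z i * (φ K - φ L))) ≤ 0 := by
      apply Finset.sum_nonpos
      intro L _
      apply mul_nonpos_of_nonneg_of_nonpos (mul_nonneg (hnn K L) (hD i).le)
      have h1 : 0 ≤ max (un i L) 0 * max (1 - ∑ j, un j K) 0 * Bern (z i * (φ K - φ L)) :=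
        mul_nonneg (mul_nonneg (le_max_right _ _) (le_max_right _ _)) (Bern_pos _).le
      nlinarith
    have h5 : 0 ≤ m K * (un i K - up i K) := by
      nlinarith [mul_nonneg hτ.le (neg_nonneg.2 hsle)]
    nlinarith [hm K, hup_nn i K]
  -- Step B: nonnegativity of u0
  have hB : ∀ K, 0 ≤ 1 - ∑ i, un i K := by
    intro K
    by_contra h
    push_neg at h
    have hmax : max (1 - ∑ j, un j K) 0 = 0 := max_eq_right (by linarith)
    have heq : ∑ i, (m K * (un i K - up i K) +
      τ * ∑ L, a K L * D i *
        (max (un i K) 0 * max (1 - ∑ j, un j L) 0 * Bern (z i * (φ L - φ K)) -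
          max (un i L) 0 * max (1 - ∑ j, un j K) 0 * Bern (z i * (φ K - φ L)))) = 0 := by
      simp [hscheme]
    simp only [hmax, mul_zero, zero_mul, sub_zero] at heq
    rw [Finset.sum_add_distrib] at heq
    have h1 : ∑ i, m K * (un i K - up i K) = m K * ((∑ i, un i K) - ∑ i, up i K) := by
      simp only [mul_sub, Finset.sum_sub_distrib, Finset.mul_sum]
    have h2 : 0 ≤ ∑ i, τ * ∑ L, a K L * D i *
        (max (un i K) 0 * max (1 - ∑ j, un j L) 0 * Bern (z i * (φ L - φ K))) := by
      apply Finset.sum_nonneg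
      intro i _
      apply mul_nonneg hτ.le
      apply Finset.sum_nonneg
      intro L _
      exact mul_nonneg (mul_nonneg (hnn K L) (hD i).le)
        (mul_nonneg (mul_nonneg (le_max_right _ _) (le_max_right _ _)) (Bern_pos _).le)
    rw [h1] at heq
    have h3 : ∑ i, up i K ≤ 1 := hup_sum K
    nlinarith [hm K, mul_pos (hm K) (show (0:ℝ) < (∑ i, un i K) - ∑ i, up i K by linarith)]
  -- cleaned scheme
  have hmaxu : ∀ i K, max (un i K) 0 = un i K := fun i K => max_eq_left (hA i K)
  have hmax0 : ∀ K, max (1 - ∑ j, un j K) 0 = 1 - ∑ j, un j K := fun K => max_eq_left (hB K)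
  have hscheme' : ∀ i K, m K * (un i K - up i K) +
      τ * ∑ L, a K L * D i *
        (un i K * (1 - ∑ j, un j L) * Bern (z i * (φ L - φ K)) -
          un i L * (1 - ∑ j, un j K) * Bern (z i * (φ K - φ L))) = 0 := by
    intro i K
    have := hscheme i K
    simp only [hmaxu, hmax0] at this
    exact this
  -- mass conservation
  have hmass : ∀ i, ∑ K, m K * un i K = ∑ K, m K * up i K := by
    intro i
    have hsum : ∑ K, (m K * (un i K - up i K) +
      τ * ∑ L, a K L * D i *
        (un i K * (1 - ∑ j, un j L) * Bern (z i * (φ L - φ K)) -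
          un i L * (1 - ∑ j, un j K) * Bern (z i * (φ K - φ L)))) = 0 := by
      simp [hscheme']
    have hdouble : ∑ K, ∑ L, a K L * D i *
        (un i K * (1 - ∑ j, un j L) * Bern (z i * (φ L - φ K)) -
          un i L * (1 - ∑ j, un j K) * Bern (z i * (φ K - φ L))) = 0 := by
      have h2 : ∑ K, ∑ L, a K L * D i *
        (un i K * (1 - ∑ j, un j L) * Bern (z i * (φ L - φ K)) -
          un i L * (1 - ∑ j, un j K) * Bern (z i * (φ K - φ L)))
        = - ∑ K, ∑ L, a K L * D i *
        (un i K * (1 - ∑ j, un j L) * Bern (z i * (φ L - φ K)) -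
          un i L * (1 - ∑ j, un j K) * Bern (z i * (φ K - φ L))) := by
        conv_lhs => rw [Finset.sum_comm]
        rw [← Finset.sum_neg_distrib]
        apply Finset.sum_congr rfl
        intro K _
        rw [← Finset.sum_neg_distrib]
        apply Finset.sum_congr rfl
        intro L _
        rw [hsym L K]
        ring
      linarith
    rw [Finset.sum_add_distrib] at hsum
    have h4 : ∑ (x : T), τ * ∑ L, a x L * D i *
        (un i x * (1 - ∑ j, un j L) * Bern (z i * (φ L - φ x)) -
          un i L * (1 - ∑ j, un j x) * Bern (z i * (φ x - φ L))) = 0 := by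
      rw [← Finset.mul_sum, hdouble, mul_zero]
    rw [h4, add_zero] at hsum
    simp only [mul_sub, Finset.sum_sub_distrib] at hsum
    linarith
  -- propagation lemma for u0
  have key0 : ∀ K, (1 - ∑ j, un j K) = 0 → ∀ L, 0 < a K L → (1 - ∑ j, un j L) = 0 := by
    intro K hK L haL
    have h0 : ∑ i, (m K * (un i K - up i K) +
      τ * ∑ L', a K L' * D i *
        (un i K * (1 - ∑ j, un j L') * Bern (z i * (φ L' - φ K)) -
          un i L' * (1 - ∑ j, un j K) * Bern (z i * (φ K - φ L')))) = 0 := by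
      simp [hscheme']
    simp only [hK, mul_zero, zero_mul, sub_zero] at h0
    rw [Finset.sum_add_distrib] at h0
    have hsK : ∑ i, un i K = 1 := by linarith
    have h1 : ∑ i, m K * (un i K - up i K) = m K * ((∑ i, un i K) - ∑ i, up i K) := by
      simp only [mul_sub, Finset.sum_sub_distrib, Finset.mul_sum]
    have hpos1 : 0 ≤ ∑ i, m K * (un i K - up i K) := by
      rw [h1, hsK]
      exact mul_nonneg (hm K).le (by linarith [hup_sum K])
    have hterm_nn : ∀ i (L' : T), 0 ≤ a K L' * D i *
        (un i K * (1 - ∑ j, un j L') * Bern (z i * (φ L' - φ K))) := by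
      intro i L'
      exact mul_nonneg (mul_nonneg (hnn K L') (hD i).le)
        (mul_nonneg (mul_nonneg (hA i K) (hB L')) (Bern_pos _).le)
    have hpos2 : ∀ i ∈ (Finset.univ : Finset (Fin I)), 0 ≤ τ * ∑ L', a K L' * D i *
        (un i K * (1 - ∑ j, un j L') * Bern (z i * (φ L' - φ K))) := by
      intro i _
      exact mul_nonneg hτ.le (Finset.sum_nonneg fun L' _ => hterm_nn i L')
    have hsum2 : ∑ i, τ * ∑ L', a K L' * D i *
        (un i K * (1 - ∑ j, un j L') * Bern (z i * (φ L' - φ K))) = 0 := by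
      have hle : ∑ i, τ * ∑ L', a K L' * D i *
        (un i K * (1 - ∑ j, un j L') * Bern (z i * (φ L' - φ K))) ≤ 0 := by linarith
      exact le_antisymm hle (Finset.sum_nonneg hpos2)
    -- find i with positive un i K
    have hex : ∃ i, 0 < un i K := by
      by_contra hc
      push_neg at hc
      have : ∑ i, un i K = 0 :=
        Finset.sum_eq_zero fun i _ => le_antisymm (hc i) (hA i K)
      rw [this] at hsK
      norm_num at hsK
    obtain ⟨i0, hi0⟩ := hex
    have hz1 := (Finset.sum_eq_zero_iff_of_nonneg hpos2).mp hsum2 i0 (Finset.mem_univ i0)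
    have hz2 : ∑ L', a K L' * D i0 *
        (un i0 K * (1 - ∑ j, un j L') * Bern (z i0 * (φ L' - φ K))) = 0 := by
      rcases mul_eq_zero.mp hz1 with h | h
      · exact absurd h hτ.ne'
      · exact h
    have hz3 := (Finset.sum_eq_zero_iff_of_nonneg
      (fun L' _ => hterm_nn i0 L')).mp hz2 L (Finset.mem_univ L)
    have hprod : (a K L * D i0 * (un i0 K * Bern (z i0 * (φ L - φ K)))) *
        (1 - ∑ j, un j L) = 0 := by linear_combination hz3
    have hcpos : 0 < a K L * D i0 * (un i0 K * Bern (z i0 * (φ L - φ K))) :=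
      mul_pos (mul_pos haL (hD i0)) (mul_pos hi0 (Bern_pos _))
    exact (mul_eq_zero.mp hprod).resolve_left hcpos.ne'
  -- positivity of u0
  have h0pos : ∀ K, 0 < 1 - ∑ i, un i K := by
    by_contra hc
    push_neg at hc
    obtain ⟨K0, hK0⟩ := hc
    have hK0' : (1 - ∑ j, un j K0) = 0 := le_antisymm hK0 (hB K0)
    have hall : ∀ L, (1 - ∑ j, un j L) = 0 := by
      intro L
      induction hconn K0 L with
      | refl => exact hK0'
      | tail _ hbc ih => exact key0 _ ih _ hbc
    have hzero : ∑ K, m K * (1 - ∑ i, un i K) = 0 :=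
      Finset.sum_eq_zero fun K _ => by rw [hall K, mul_zero]
    have hmass0 : ∑ K, m K * (1 - ∑ i, un i K) = ∑ K, m K * (1 - ∑ i, up i K) := by
      have h1 : ∀ (v : Fin I → T → ℝ),
          ∑ K, m K * (1 - ∑ i, v i K) = (∑ K, m K) - ∑ i, ∑ K, m K * v i K := by
        intro v
        rw [Finset.sum_comm]
        simp only [mul_sub, mul_one, Finset.sum_sub_distrib, Finset.mul_sum]
      rw [h1 un, h1 up]
      have : ∑ i, ∑ K, m K * un i K = ∑ i, ∑ K, m K * up i K :=
        Finset.sum_congr rfl fun i _ => hmass i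
      rw [this]
    rw [hmass0] at hzero
    linarith [hup_mass0]
  -- propagation lemma for un
  have keyi : ∀ i K, un i K = 0 → ∀ L, 0 < a K L → un i L = 0 := by
    intro i K hK L haL
    have heq := hscheme' i K
    simp only [hK, zero_mul, zero_sub, zero_mul] at heq
    have hterm_np : ∀ L' ∈ (Finset.univ : Finset T), a K L' * D i *
        (0 * (1 - ∑ j, un j L') * Bern (z i * (φ L' - φ K)) -
          un i L' * (1 - ∑ j, un j K) * Bern (z i * (φ K - φ L'))) ≤ 0 := by
      intro L' _
      apply mul_nonpos_of_nonneg_of_nonpos (mul_nonneg (hnn K L') (hD i).le)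
      have : 0 ≤ un i L' * (1 - ∑ j, un j K) * Bern (z i * (φ K - φ L')) :=
        mul_nonneg (mul_nonneg (hA i L') (hB K)) (Bern_pos _).le
      nlinarith
    -- the total sum must be zero
    have hS : ∑ L', a K L' * D i *
        (0 * (1 - ∑ j, un j L') * Bern (z i * (φ L' - φ K)) -
          un i L' * (1 - ∑ j, un j K) * Bern (z i * (φ K - φ L'))) = 0 := by
      have heq2 := hscheme' i K
      rw [hK] at heq2
      have hle : 0 ≤ τ * ∑ L', a K L' * D i *
        (0 * (1 - ∑ j, un j L') * Bern (z i * (φ L' - φ K)) -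
          un i L' * (1 - ∑ j, un j K) * Bern (z i * (φ K - φ L'))) := by
        nlinarith [hm K, hup_nn i K]
      have hge := Finset.sum_nonpos hterm_np
      have := mul_nonpos_of_nonneg_of_nonpos hτ.le hge
      have : τ * ∑ L', a K L' * D i *
        (0 * (1 - ∑ j, un j L') * Bern (z i * (φ L' - φ K)) -
          un i L' * (1 - ∑ j, un j K) * Bern (z i * (φ K - φ L'))) = 0 := le_antisymm this hle
      rcases mul_eq_zero.mp this with h | h
      · exact absurd h hτ.ne'
      · exact h
    have hz3 := (Finset.sum_eq_zero_iff_of_nonpos hterm_np).mp hS L (Finset.mem_univ L)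
    have hprod : (a K L * D i * ((1 - ∑ j, un j K) * Bern (z i * (φ K - φ L)))) *
        (un i L) = 0 := by linear_combination -hz3
    have hcpos : 0 < a K L * D i * ((1 - ∑ j, un j K) * Bern (z i * (φ K - φ L))) :=
      mul_pos (mul_pos haL (hD i)) (mul_pos (h0pos K) (Bern_pos _))
    exact (mul_eq_zero.mp hprod).resolve_left hcpos.ne'
  refine ⟨?_, h0pos⟩
  intro i K
  by_contra hc
  push_neg at hc
  have hK' : un i K = 0 := le_antisymm hc (hA i K)
  have hall : ∀ L, un i L = 0 := by
    intro L
    induction hconn K L with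
    | refl => exact hK'
    | tail _ hbc ih => exact keyi i _ ih _ hbc
  have hzero : ∑ L, m L * un i L = 0 :=
    Finset.sum_eq_zero fun L _ => by rw [hall L, mul_zero]
  rw [hmass i] at hzero
  linarith [hup_mass i]
end

section
/- Assume the graph on 𝒯 with edge set {(K,L) : a(K,L) > 0} is connected and that b_K > 0 for at least one K ∈ 𝒯. Then the functional Ψ : ℝ^𝒯 × ℝ^I → ℝ defined by Ψ(y, ξ) = (λ²/4)·Σ_{K,L} a(K,L)·(y_K − y_L)² + (λ²/2)·Σ_K b_K·(y_K − g_K)² + Σ_K m_K·log(1 + Σ_{i=1}^I exp(ξ_i − z_i·y_K)) − Σ_K m_K·(f(K)·y_K + Σ_{i=1}^I ξ_i·c_i(K)) is strictly convex; in particular, Ψ admits at most one minimizer. -/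
open Finset Real

private lemma exp_combo_le {x y s : ℝ} (hs : 0 < s) (hs1 : s < 1) :
    Real.exp (s * x + (1 - s) * y) ≤ s * Real.exp x + (1 - s) * Real.exp y := by
  have := convexOn_exp.2 (Set.mem_univ x) (Set.mem_univ y) hs.le
    (by linarith : (0:ℝ) ≤ 1 - s) (by ring)
  simpa [smul_eq_mul] using this

private lemma exp_combo_lt {x y s : ℝ} (hxy : x ≠ y) (hs : 0 < s) (hs1 : s < 1) :
    Real.exp (s * x + (1 - s) * y) < s * Real.exp x + (1 - s) * Real.exp y := by
  have := strictConvexOn_exp.2 (Set.mem_univ x) (Set.mem_univ y) hxy hs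
    (by linarith : (0:ℝ) < 1 - s) (by ring)
  simpa [smul_eq_mul] using this

private lemma lse_lt {n : ℕ} {u v : Fin n → ℝ} (huv : u ≠ v) {s : ℝ}
    (hs : 0 < s) (hs1 : s < 1) :
    Real.log (1 + ∑ i, Real.exp (s * u i + (1 - s) * v i)) <
      s * Real.log (1 + ∑ i, Real.exp (u i)) +
        (1 - s) * Real.log (1 + ∑ i, Real.exp (v i)) := by
  set Su := ∑ i, Real.exp (u i) with hSu
  set Sv := ∑ i, Real.exp (v i) with hSv
  have hSu0 : 0 ≤ Su := Finset.sum_nonneg fun i _ => (Real.exp_pos _).le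
  have hSv0 : 0 ≤ Sv := Finset.sum_nonneg fun i _ => (Real.exp_pos _).le
  have hX : (0:ℝ) < 1 + Su := by linarith
  have hY : (0:ℝ) < 1 + Sv := by linarith
  set E := Real.exp (s * Real.log (1 + Su) + (1 - s) * Real.log (1 + Sv)) with hE
  have hE0 : 0 < E := Real.exp_pos _
  -- termwise bounds
  have hterm : ∀ i, Real.exp (s * u i + (1 - s) * v i) ≤
      E * (s * (Real.exp (u i) / (1 + Su)) + (1 - s) * (Real.exp (v i) / (1 + Sv))) := by
    intro i
    have h1 : Real.exp (s * u i + (1 - s) * v i) =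
        E * Real.exp (s * (u i - Real.log (1 + Su)) + (1 - s) * (v i - Real.log (1 + Sv))) := by
      rw [hE, ← Real.exp_add]; congr 1; ring
    have h3 : Real.exp (u i - Real.log (1 + Su)) = Real.exp (u i) / (1 + Su) := by
      rw [Real.exp_sub, Real.exp_log hX]
    have h4 : Real.exp (v i - Real.log (1 + Sv)) = Real.exp (v i) / (1 + Sv) := by
      rw [Real.exp_sub, Real.exp_log hY]
    calc Real.exp (s * u i + (1 - s) * v i)
        = E * Real.exp (s * (u i - Real.log (1 + Su)) + (1 - s) * (v i - Real.log (1 + Sv))) := h1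
      _ ≤ E * (s * Real.exp (u i - Real.log (1 + Su)) +
            (1 - s) * Real.exp (v i - Real.log (1 + Sv))) :=
          mul_le_mul_of_nonneg_left (exp_combo_le hs hs1) hE0.le
      _ = E * (s * (Real.exp (u i) / (1 + Su)) + (1 - s) * (Real.exp (v i) / (1 + Sv))) := by
          rw [h3, h4]
  have htermlt : ∀ i, u i - Real.log (1 + Su) ≠ v i - Real.log (1 + Sv) →
      Real.exp (s * u i + (1 - s) * v i) <
      E * (s * (Real.exp (u i) / (1 + Su)) + (1 - s) * (Real.exp (v i) / (1 + Sv))) := by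
    intro i hne
    have h1 : Real.exp (s * u i + (1 - s) * v i) =
        E * Real.exp (s * (u i - Real.log (1 + Su)) + (1 - s) * (v i - Real.log (1 + Sv))) := by
      rw [hE, ← Real.exp_add]; congr 1; ring
    have h3 : Real.exp (u i - Real.log (1 + Su)) = Real.exp (u i) / (1 + Su) := by
      rw [Real.exp_sub, Real.exp_log hX]
    have h4 : Real.exp (v i - Real.log (1 + Sv)) = Real.exp (v i) / (1 + Sv) := by
      rw [Real.exp_sub, Real.exp_log hY]
    calc Real.exp (s * u i + (1 - s) * v i)
        = E * Real.exp (s * (u i - Real.log (1 + Su)) + (1 - s) * (v i - Real.log (1 + Sv))) := h1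
      _ < E * (s * Real.exp (u i - Real.log (1 + Su)) +
            (1 - s) * Real.exp (v i - Real.log (1 + Sv))) :=
          mul_lt_mul_of_pos_left (exp_combo_lt hne hs hs1) hE0
      _ = E * (s * (Real.exp (u i) / (1 + Su)) + (1 - s) * (Real.exp (v i) / (1 + Sv))) := by
          rw [h3, h4]
  have hone_le : (1:ℝ) ≤ E * (s * (1 / (1 + Su)) + (1 - s) * (1 / (1 + Sv))) := by
    have h1 : (1:ℝ) = E * Real.exp (s * (-Real.log (1 + Su)) + (1 - s) * (-Real.log (1 + Sv))) := by
      rw [hE, ← Real.exp_add, show s * Real.log (1 + Su) + (1 - s) * Real.log (1 + Sv)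
        + (s * (-Real.log (1 + Su)) + (1 - s) * (-Real.log (1 + Sv))) = 0 by ring, Real.exp_zero]
    have h3 : Real.exp (-Real.log (1 + Su)) = 1 / (1 + Su) := by
      rw [Real.exp_neg, Real.exp_log hX, one_div]
    have h4 : Real.exp (-Real.log (1 + Sv)) = 1 / (1 + Sv) := by
      rw [Real.exp_neg, Real.exp_log hY, one_div]
    calc (1:ℝ) = E * Real.exp (s * (-Real.log (1 + Su)) + (1 - s) * (-Real.log (1 + Sv))) := h1
      _ ≤ E * (s * Real.exp (-Real.log (1 + Su)) + (1 - s) * Real.exp (-Real.log (1 + Sv))) :=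
          mul_le_mul_of_nonneg_left (exp_combo_le hs hs1) hE0.le
      _ = E * (s * (1 / (1 + Su)) + (1 - s) * (1 / (1 + Sv))) := by rw [h3, h4]
  have hone_lt : -Real.log (1 + Su) ≠ -Real.log (1 + Sv) →
      (1:ℝ) < E * (s * (1 / (1 + Su)) + (1 - s) * (1 / (1 + Sv))) := by
    intro hne
    have h1 : (1:ℝ) = E * Real.exp (s * (-Real.log (1 + Su)) + (1 - s) * (-Real.log (1 + Sv))) := by
      rw [hE, ← Real.exp_add, show s * Real.log (1 + Su) + (1 - s) * Real.log (1 + Sv)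
        + (s * (-Real.log (1 + Su)) + (1 - s) * (-Real.log (1 + Sv))) = 0 by ring, Real.exp_zero]
    have h3 : Real.exp (-Real.log (1 + Su)) = 1 / (1 + Su) := by
      rw [Real.exp_neg, Real.exp_log hX, one_div]
    have h4 : Real.exp (-Real.log (1 + Sv)) = 1 / (1 + Sv) := by
      rw [Real.exp_neg, Real.exp_log hY, one_div]
    calc (1:ℝ) = E * Real.exp (s * (-Real.log (1 + Su)) + (1 - s) * (-Real.log (1 + Sv))) := h1
      _ < E * (s * Real.exp (-Real.log (1 + Su)) + (1 - s) * Real.exp (-Real.log (1 + Sv))) :=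
          mul_lt_mul_of_pos_left (exp_combo_lt hne hs hs1) hE0
      _ = E * (s * (1 / (1 + Su)) + (1 - s) * (1 / (1 + Sv))) := by rw [h3, h4]
  -- the sum of the termwise upper bounds
  have hsum_eq : ∑ i, E * (s * (Real.exp (u i) / (1 + Su)) + (1 - s) * (Real.exp (v i) / (1 + Sv)))
      = E * (s * (Su / (1 + Su)) + (1 - s) * (Sv / (1 + Sv))) := by
    rw [← Finset.mul_sum]
    congr 1
    rw [Finset.sum_add_distrib, ← Finset.mul_sum, ← Finset.mul_sum, ← Finset.sum_div,
      ← Finset.sum_div, ← hSu, ← hSv]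
  have hcomb : E * (s * (1 / (1 + Su)) + (1 - s) * (1 / (1 + Sv)))
      + E * (s * (Su / (1 + Su)) + (1 - s) * (Sv / (1 + Sv))) = E := by
    have d1 : (1:ℝ) / (1 + Su) + Su / (1 + Su) = 1 := by
      rw [← add_div, div_self hX.ne']
    have d2 : (1:ℝ) / (1 + Sv) + Sv / (1 + Sv) = 1 := by
      rw [← add_div, div_self hY.ne']
    calc E * (s * (1 / (1 + Su)) + (1 - s) * (1 / (1 + Sv)))
        + E * (s * (Su / (1 + Su)) + (1 - s) * (Sv / (1 + Sv)))
        = E * (s * ((1:ℝ) / (1 + Su) + Su / (1 + Su))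
            + (1 - s) * ((1:ℝ) / (1 + Sv) + Sv / (1 + Sv))) := by ring
      _ = E := by rw [d1, d2]; ring
  have key : 1 + ∑ i, Real.exp (s * u i + (1 - s) * v i) < E := by
    by_cases hXY : Real.log (1 + Su) = Real.log (1 + Sv)
    · -- strictness from some index
      obtain ⟨i₀, hi₀⟩ : ∃ i, u i ≠ v i := by
        by_contra h; push_neg at h; exact huv (funext h)
      have hstrict : Real.exp (s * u i₀ + (1 - s) * v i₀) <
          E * (s * (Real.exp (u i₀) / (1 + Su)) + (1 - s) * (Real.exp (v i₀) / (1 + Sv))) := by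
        apply htermlt i₀
        rw [hXY]
        intro h; exact hi₀ (by linarith [sub_left_injective.eq_iff.mp h] )
      have hsumlt : ∑ i, Real.exp (s * u i + (1 - s) * v i) <
          ∑ i, E * (s * (Real.exp (u i) / (1 + Su)) + (1 - s) * (Real.exp (v i) / (1 + Sv))) :=
        Finset.sum_lt_sum (fun i _ => hterm i) ⟨i₀, Finset.mem_univ _, hstrict⟩
      calc 1 + ∑ i, Real.exp (s * u i + (1 - s) * v i)
          < E * (s * (1 / (1 + Su)) + (1 - s) * (1 / (1 + Sv)))
            + ∑ i, E * (s * (Real.exp (u i) / (1 + Su)) + (1 - s) * (Real.exp (v i) / (1 + Sv))) :=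
            add_lt_add_of_le_of_lt hone_le hsumlt
        _ = E := by rw [hsum_eq]; exact hcomb
    · have hsumle : ∑ i, Real.exp (s * u i + (1 - s) * v i) ≤
          ∑ i, E * (s * (Real.exp (u i) / (1 + Su)) + (1 - s) * (Real.exp (v i) / (1 + Sv))) :=
        Finset.sum_le_sum fun i _ => hterm i
      calc 1 + ∑ i, Real.exp (s * u i + (1 - s) * v i)
          < E * (s * (1 / (1 + Su)) + (1 - s) * (1 / (1 + Sv)))
            + ∑ i, E * (s * (Real.exp (u i) / (1 + Su)) + (1 - s) * (Real.exp (v i) / (1 + Sv))) :=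
            add_lt_add_of_lt_of_le (hone_lt (fun h => hXY (by linarith [neg_injective h]))) hsumle
        _ = E := by rw [hsum_eq]; exact hcomb
  have hpos : (0:ℝ) < 1 + ∑ i, Real.exp (s * u i + (1 - s) * v i) := by
    have : (0:ℝ) ≤ ∑ i, Real.exp (s * u i + (1 - s) * v i) :=
      Finset.sum_nonneg fun i _ => (Real.exp_pos _).le
    linarith
  calc Real.log (1 + ∑ i, Real.exp (s * u i + (1 - s) * v i))
      < Real.log E := Real.log_lt_log hpos key
    _ = s * Real.log (1 + Su) + (1 - s) * Real.log (1 + Sv) := Real.log_exp _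

private lemma lse_le {n : ℕ} (u v : Fin n → ℝ) {s : ℝ} (hs : 0 < s) (hs1 : s < 1) :
    Real.log (1 + ∑ i, Real.exp (s * u i + (1 - s) * v i)) ≤
      s * Real.log (1 + ∑ i, Real.exp (u i)) +
        (1 - s) * Real.log (1 + ∑ i, Real.exp (v i)) := by
  by_cases huv : u = v
  · subst huv
    have h1 : ∀ i, s * u i + (1 - s) * u i = u i := fun i => by ring
    simp only [h1]
    have : s * Real.log (1 + ∑ i, Real.exp (u i)) + (1 - s) * Real.log (1 + ∑ i, Real.exp (u i))
        = Real.log (1 + ∑ i, Real.exp (u i)) := by ring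
    linarith
  · exact (lse_lt huv hs hs1).le

private lemma conn_eq {T : Type*} (aT : T → T → ℝ) (Δ : T → ℝ)
    (h : ∀ K L, 0 < aT K L → Δ K = Δ L) {K L : T}
    (hKL : Relation.ReflTransGen (fun K L => 0 < aT K L) K L) : Δ K = Δ L := by
  induction hKL with
  | refl => rfl
  | tail _ h2 ih => exact ih.trans (h _ _ h2)


set_option maxHeartbeats 1000000 in
/-- Strict convexity of the discrete steady-state functional `Ψ` (assuming the
mesh graph is connected and at least one Dirichlet weight is positive); in
particular `Ψ` admits at most one minimizer. -/
theorem Psi_strictConvex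
    (T : Type*) [Fintype T] [Nonempty T]
    (m : T → ℝ) (hm : ∀ K, 0 < m K)
    (a : T → T → ℝ) (hsym : ∀ K L, a K L = a L K)
    (hnn : ∀ K L, 0 ≤ a K L) (hdiag : ∀ K, a K K = 0)
    (b : T → ℝ) (hb : ∀ K, 0 ≤ b K) (g : T → ℝ)
    (lam : ℝ) (hlam : 0 < lam)
    (I : ℕ) (hI : 1 ≤ I) (z : Fin I → ℝ)
    (f : T → ℝ) (c : Fin I → T → ℝ)
    (hconn : ∀ K L : T, Relation.ReflTransGen (fun K L => 0 < a K L) K L)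
    (hbpos : ∃ K, 0 < b K)
    (Ψ : (T → ℝ) × (Fin I → ℝ) → ℝ)
    (hΨ : ∀ (y : T → ℝ) (ξ : Fin I → ℝ), Ψ (y, ξ) =
      lam ^ 2 / 4 * ∑ K, ∑ L, a K L * (y K - y L) ^ 2 +
      lam ^ 2 / 2 * ∑ K, b K * (y K - g K) ^ 2 +
      (∑ K, m K * Real.log (1 + ∑ i, Real.exp (ξ i - z i * y K))) -
      ∑ K, m K * (f K * y K + ∑ i, ξ i * c i K)) :
    StrictConvexOn ℝ Set.univ Ψ ∧
    ∀ p q : (T → ℝ) × (Fin I → ℝ),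
      IsMinOn Ψ Set.univ p → IsMinOn Ψ Set.univ q → p = q := by
  have hsc : StrictConvexOn ℝ Set.univ Ψ := by
    refine ⟨convex_univ, ?_⟩
    rintro ⟨y1, ξ1⟩ - ⟨y2, ξ2⟩ - hne s t hs ht hst
    have ht' : t = 1 - s := by linarith
    subst ht'
    have hs1 : s < 1 := by linarith
    have hmid : (s • ((y1, ξ1) : (T → ℝ) × (Fin I → ℝ)) + (1 - s) • (y2, ξ2)) =
        ((fun K => s * y1 K + (1 - s) * y2 K : T → ℝ),
          (fun i => s * ξ1 i + (1 - s) * ξ2 i : Fin I → ℝ)) := by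
      refine Prod.ext ?_ ?_ <;> funext w <;> simp
    rw [hmid]
    simp only [hΨ, smul_eq_mul]
    -- quadratic identity for the transmissibility term
    have hQ1 : (∑ K, ∑ L, a K L * (s * y1 K + (1 - s) * y2 K - (s * y1 L + (1 - s) * y2 L)) ^ 2)
        = s * (∑ K, ∑ L, a K L * (y1 K - y1 L) ^ 2)
          + (1 - s) * (∑ K, ∑ L, a K L * (y2 K - y2 L) ^ 2)
          - s * (1 - s) * (∑ K, ∑ L, a K L * (y1 K - y2 K - (y1 L - y2 L)) ^ 2) := by
      calc (∑ K, ∑ L, a K L * (s * y1 K + (1 - s) * y2 K - (s * y1 L + (1 - s) * y2 L)) ^ 2)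
          = ∑ K, ∑ L, (s * (a K L * (y1 K - y1 L) ^ 2) + (1 - s) * (a K L * (y2 K - y2 L) ^ 2)
              - s * (1 - s) * (a K L * (y1 K - y2 K - (y1 L - y2 L)) ^ 2)) :=
            Finset.sum_congr rfl fun K _ => Finset.sum_congr rfl fun L _ => by ring
        _ = _ := by
            simp only [Finset.sum_add_distrib, Finset.sum_sub_distrib, ← Finset.mul_sum]
    -- quadratic identity for the Dirichlet term
    have hQ2 : (∑ K, b K * (s * y1 K + (1 - s) * y2 K - g K) ^ 2)
        = s * (∑ K, b K * (y1 K - g K) ^ 2) + (1 - s) * (∑ K, b K * (y2 K - g K) ^ 2)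
          - s * (1 - s) * (∑ K, b K * (y1 K - y2 K) ^ 2) := by
      calc (∑ K, b K * (s * y1 K + (1 - s) * y2 K - g K) ^ 2)
          = ∑ K, (s * (b K * (y1 K - g K) ^ 2) + (1 - s) * (b K * (y2 K - g K) ^ 2)
              - s * (1 - s) * (b K * (y1 K - y2 K) ^ 2)) :=
            Finset.sum_congr rfl fun K _ => by ring
        _ = _ := by
            simp only [Finset.sum_add_distrib, Finset.sum_sub_distrib, ← Finset.mul_sum]
    -- the linear part is affine
    have hLin : (∑ K, m K * (f K * (s * y1 K + (1 - s) * y2 K)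
          + ∑ i, (s * ξ1 i + (1 - s) * ξ2 i) * c i K))
        = s * (∑ K, m K * (f K * y1 K + ∑ i, ξ1 i * c i K))
          + (1 - s) * (∑ K, m K * (f K * y2 K + ∑ i, ξ2 i * c i K)) := by
      have hin : ∀ K, (∑ i, (s * ξ1 i + (1 - s) * ξ2 i) * c i K)
          = s * ∑ i, ξ1 i * c i K + (1 - s) * ∑ i, ξ2 i * c i K := by
        intro K
        rw [Finset.mul_sum, Finset.mul_sum, ← Finset.sum_add_distrib]
        exact Finset.sum_congr rfl fun i _ => by ring
      calc (∑ K, m K * (f K * (s * y1 K + (1 - s) * y2 K)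
            + ∑ i, (s * ξ1 i + (1 - s) * ξ2 i) * c i K))
          = ∑ K, (s * (m K * (f K * y1 K + ∑ i, ξ1 i * c i K))
              + (1 - s) * (m K * (f K * y2 K + ∑ i, ξ2 i * c i K))) :=
            Finset.sum_congr rfl fun K _ => by rw [hin K]; ring
        _ = _ := by simp only [Finset.sum_add_distrib, ← Finset.mul_sum]
    -- multiplied versions
    have hQ1' : lam ^ 2 / 4 * (∑ K, ∑ L, a K L *
          (s * y1 K + (1 - s) * y2 K - (s * y1 L + (1 - s) * y2 L)) ^ 2)
        = lam ^ 2 / 4 * (s * (∑ K, ∑ L, a K L * (y1 K - y1 L) ^ 2)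
            + (1 - s) * (∑ K, ∑ L, a K L * (y2 K - y2 L) ^ 2)
            - s * (1 - s) * (∑ K, ∑ L, a K L * (y1 K - y2 K - (y1 L - y2 L)) ^ 2)) := by
      rw [hQ1]
    have hQ2' : lam ^ 2 / 2 * (∑ K, b K * (s * y1 K + (1 - s) * y2 K - g K) ^ 2)
        = lam ^ 2 / 2 * (s * (∑ K, b K * (y1 K - g K) ^ 2)
            + (1 - s) * (∑ K, b K * (y2 K - g K) ^ 2)
            - s * (1 - s) * (∑ K, b K * (y1 K - y2 K) ^ 2)) := by
      rw [hQ2]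
    have hS1nn : (0:ℝ) ≤ ∑ K, ∑ L, a K L * (y1 K - y2 K - (y1 L - y2 L)) ^ 2 :=
      Finset.sum_nonneg fun K _ => Finset.sum_nonneg fun L _ =>
        mul_nonneg (hnn K L) (sq_nonneg _)
    have hS2nn : (0:ℝ) ≤ ∑ K, b K * (y1 K - y2 K) ^ 2 :=
      Finset.sum_nonneg fun K _ => mul_nonneg (hb K) (sq_nonneg _)
    by_cases hy : y1 = y2
    · -- y-parts equal, ξ-parts differ: strictness from the log-sum-exp term
      have hξ : ξ1 ≠ ξ2 := fun h => hne (by rw [hy, h])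
      have hCK : ∀ K, Real.log (1 + ∑ i, Real.exp
            (s * ξ1 i + (1 - s) * ξ2 i - z i * (s * y1 K + (1 - s) * y2 K)))
          < s * Real.log (1 + ∑ i, Real.exp (ξ1 i - z i * y1 K))
            + (1 - s) * Real.log (1 + ∑ i, Real.exp (ξ2 i - z i * y2 K)) := by
        intro K
        have harg : ∀ i, s * ξ1 i + (1 - s) * ξ2 i - z i * (s * y1 K + (1 - s) * y2 K)
            = s * (ξ1 i - z i * y1 K) + (1 - s) * (ξ2 i - z i * y2 K) := by
          intro i; rw [hy]; ring
        simp only [harg]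
        refine lse_lt ?_ hs hs1
        intro h
        apply hξ
        funext i
        have := congrFun h i
        simp only [hy] at this
        linarith
      have hC : (∑ K, m K * Real.log (1 + ∑ i, Real.exp
            (s * ξ1 i + (1 - s) * ξ2 i - z i * (s * y1 K + (1 - s) * y2 K))))
          < s * (∑ K, m K * Real.log (1 + ∑ i, Real.exp (ξ1 i - z i * y1 K)))
            + (1 - s) * (∑ K, m K * Real.log (1 + ∑ i, Real.exp (ξ2 i - z i * y2 K))) := by
        calc (∑ K, m K * Real.log (1 + ∑ i, Real.exp
              (s * ξ1 i + (1 - s) * ξ2 i - z i * (s * y1 K + (1 - s) * y2 K))))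
            < ∑ K, (s * (m K * Real.log (1 + ∑ i, Real.exp (ξ1 i - z i * y1 K)))
                + (1 - s) * (m K * Real.log (1 + ∑ i, Real.exp (ξ2 i - z i * y2 K)))) := by
              refine Finset.sum_lt_sum_of_nonempty Finset.univ_nonempty fun K _ => ?_
              calc m K * Real.log (1 + ∑ i, Real.exp
                    (s * ξ1 i + (1 - s) * ξ2 i - z i * (s * y1 K + (1 - s) * y2 K)))
                  < m K * (s * Real.log (1 + ∑ i, Real.exp (ξ1 i - z i * y1 K))
                      + (1 - s) * Real.log (1 + ∑ i, Real.exp (ξ2 i - z i * y2 K))) :=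
                    mul_lt_mul_of_pos_left (hCK K) (hm K)
                _ = s * (m K * Real.log (1 + ∑ i, Real.exp (ξ1 i - z i * y1 K)))
                    + (1 - s) * (m K * Real.log (1 + ∑ i, Real.exp (ξ2 i - z i * y2 K))) := by
                    ring
          _ = _ := by simp only [Finset.sum_add_distrib, ← Finset.mul_sum]
      have hd1 : (0:ℝ) ≤ lam ^ 2 / 4 * (s * (1 - s)
            * (∑ K, ∑ L, a K L * (y1 K - y2 K - (y1 L - y2 L)) ^ 2)) :=
        mul_nonneg (by positivity) (mul_nonneg (by nlinarith) hS1nn)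
      have hd2 : (0:ℝ) ≤ lam ^ 2 / 2 * (s * (1 - s) * (∑ K, b K * (y1 K - y2 K) ^ 2)) :=
        mul_nonneg (by positivity) (mul_nonneg (by nlinarith) hS2nn)
      rw [hQ1', hQ2', hLin]
      linarith [hC, hd1, hd2]
    · -- y-parts differ: strictness from the quadratic form (connectivity + Dirichlet)
      have hCK : ∀ K, Real.log (1 + ∑ i, Real.exp
            (s * ξ1 i + (1 - s) * ξ2 i - z i * (s * y1 K + (1 - s) * y2 K)))
          ≤ s * Real.log (1 + ∑ i, Real.exp (ξ1 i - z i * y1 K))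
            + (1 - s) * Real.log (1 + ∑ i, Real.exp (ξ2 i - z i * y2 K)) := by
        intro K
        have harg : ∀ i, s * ξ1 i + (1 - s) * ξ2 i - z i * (s * y1 K + (1 - s) * y2 K)
            = s * (ξ1 i - z i * y1 K) + (1 - s) * (ξ2 i - z i * y2 K) := by
          intro i; ring
        simp only [harg]
        exact lse_le _ _ hs hs1
      have hC : (∑ K, m K * Real.log (1 + ∑ i, Real.exp
            (s * ξ1 i + (1 - s) * ξ2 i - z i * (s * y1 K + (1 - s) * y2 K))))
          ≤ s * (∑ K, m K * Real.log (1 + ∑ i, Real.exp (ξ1 i - z i * y1 K)))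
            + (1 - s) * (∑ K, m K * Real.log (1 + ∑ i, Real.exp (ξ2 i - z i * y2 K))) := by
        calc (∑ K, m K * Real.log (1 + ∑ i, Real.exp
              (s * ξ1 i + (1 - s) * ξ2 i - z i * (s * y1 K + (1 - s) * y2 K))))
            ≤ ∑ K, (s * (m K * Real.log (1 + ∑ i, Real.exp (ξ1 i - z i * y1 K)))
                + (1 - s) * (m K * Real.log (1 + ∑ i, Real.exp (ξ2 i - z i * y2 K)))) := by
              refine Finset.sum_le_sum fun K _ => ?_
              calc m K * Real.log (1 + ∑ i, Real.exp
                    (s * ξ1 i + (1 - s) * ξ2 i - z i * (s * y1 K + (1 - s) * y2 K)))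
                  ≤ m K * (s * Real.log (1 + ∑ i, Real.exp (ξ1 i - z i * y1 K))
                      + (1 - s) * Real.log (1 + ∑ i, Real.exp (ξ2 i - z i * y2 K))) :=
                    mul_le_mul_of_nonneg_left (hCK K) (hm K).le
                _ = s * (m K * Real.log (1 + ∑ i, Real.exp (ξ1 i - z i * y1 K)))
                    + (1 - s) * (m K * Real.log (1 + ∑ i, Real.exp (ξ2 i - z i * y2 K))) := by
                    ring
          _ = _ := by simp only [Finset.sum_add_distrib, ← Finset.mul_sum]
      -- the quadratic deficit is strictly positive
      have hSpos : (0:ℝ) < ∑ K, ∑ L, a K L * (y1 K - y2 K - (y1 L - y2 L)) ^ 2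
          ∨ (0:ℝ) < ∑ K, b K * (y1 K - y2 K) ^ 2 := by
        by_contra h
        push_neg at h
        obtain ⟨h1, h2⟩ := h
        have hS1z : (∑ K, ∑ L, a K L * (y1 K - y2 K - (y1 L - y2 L)) ^ 2) = 0 :=
          le_antisymm h1 hS1nn
        have hS2z : (∑ K, b K * (y1 K - y2 K) ^ 2) = 0 := le_antisymm h2 hS2nn
        have hz2 : ∀ K, b K * (y1 K - y2 K) ^ 2 = 0 := by
          have := (Finset.sum_eq_zero_iff_of_nonneg
            (fun K _ => mul_nonneg (hb K) (sq_nonneg (y1 K - y2 K)))).mp hS2z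
          exact fun K => this K (Finset.mem_univ K)
        have hz1 : ∀ K L, a K L * (y1 K - y2 K - (y1 L - y2 L)) ^ 2 = 0 := by
          have hrow := (Finset.sum_eq_zero_iff_of_nonneg
            (fun K _ => Finset.sum_nonneg fun L _ =>
              mul_nonneg (hnn K L) (sq_nonneg _))).mp hS1z
          intro K L
          have := (Finset.sum_eq_zero_iff_of_nonneg
            (fun L _ => mul_nonneg (hnn K L) (sq_nonneg
              (y1 K - y2 K - (y1 L - y2 L))))).mp (hrow K (Finset.mem_univ K))
          exact this L (Finset.mem_univ L)
        have hedge : ∀ K L, 0 < a K L → (y1 K - y2 K) = (y1 L - y2 L) := by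
          intro K L hKL
          have h0 : (y1 K - y2 K - (y1 L - y2 L)) ^ 2 = 0 := by
            rcases mul_eq_zero.mp (hz1 K L) with h | h
            · exact absurd h hKL.ne'
            · exact h
          have := (pow_eq_zero_iff two_ne_zero).mp h0
          linarith [sub_eq_zero.mp this]
        obtain ⟨K₀, hK₀⟩ := hbpos
        have hΔK₀ : y1 K₀ - y2 K₀ = 0 := by
          rcases mul_eq_zero.mp (hz2 K₀) with h | h
          · exact absurd h hK₀.ne'
          · have := (pow_eq_zero_iff two_ne_zero).mp h
            linarith
        apply hy
        funext L
        have := conn_eq a (fun K => y1 K - y2 K) hedge (hconn K₀ L)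
        have hL : y1 L - y2 L = 0 := by linarith
        linarith
      have hfac : (0:ℝ) < s * (1 - s) := by nlinarith
      rcases hSpos with hpos | hpos
      · have hd1 : (0:ℝ) < lam ^ 2 / 4 * (s * (1 - s)
              * (∑ K, ∑ L, a K L * (y1 K - y2 K - (y1 L - y2 L)) ^ 2)) :=
          mul_pos (by positivity) (mul_pos hfac hpos)
        have hd2 : (0:ℝ) ≤ lam ^ 2 / 2 * (s * (1 - s) * (∑ K, b K * (y1 K - y2 K) ^ 2)) :=
          mul_nonneg (by positivity) (mul_nonneg hfac.le hS2nn)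
        rw [hQ1', hQ2', hLin]
        linarith [hC, hd1, hd2]
      · have hd1 : (0:ℝ) ≤ lam ^ 2 / 4 * (s * (1 - s)
              * (∑ K, ∑ L, a K L * (y1 K - y2 K - (y1 L - y2 L)) ^ 2)) :=
          mul_nonneg (by positivity) (mul_nonneg hfac.le hS1nn)
        have hd2 : (0:ℝ) < lam ^ 2 / 2 * (s * (1 - s) * (∑ K, b K * (y1 K - y2 K) ^ 2)) :=
          mul_pos (by positivity) (mul_pos hfac hpos)
        rw [hQ1', hQ2', hLin]
        linarith [hC, hd1, hd2]
  refine ⟨hsc, fun p q hp hq =>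
    hsc.eq_of_isMinOn hp hq (Set.mem_univ p) (Set.mem_univ q)⟩
end

section
/- A pair (y, ξ) ∈ ℝ^𝒯 × ℝ^I is a critical point of Ψ (i.e., all partial derivatives of Ψ vanish at (y, ξ)) if and only if: (a) for every K ∈ 𝒯, λ²·(Σ_{L} a(K,L)·(y_K − y_L) + b_K·(y_K − g_K)) + m_K·r(y_K, ξ) = m_K·f(K), and (b) for every 1 ≤ i ≤ I, Σ_K m_K·v_i(y_K, ξ) = Σ_K m_K·c_i(K). -/
/-- A pair `(y, ξ)` is a critical point of `Ψ` (all partial derivatives vanish)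
iff `y` solves the discrete modified Poisson–Boltzmann equation and the mass
constraints `Σ_K m_K·vᵢ(y_K,ξ) = Σ_K m_K·cᵢ(K)` hold. -/
theorem Psi_critical_point_iff
    (T : Type*) [Fintype T] [Nonempty T] [DecidableEq T]
    (m : T → ℝ) (hm : ∀ K, 0 < m K)
    (a : T → T → ℝ) (hsym : ∀ K L, a K L = a L K)
    (hnn : ∀ K L, 0 ≤ a K L) (hdiag : ∀ K, a K K = 0)
    (b : T → ℝ) (hb : ∀ K, 0 ≤ b K) (g : T → ℝ)
    (lam : ℝ) (hlam : 0 < lam)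
    (I : ℕ) (hI : 1 ≤ I) (z : Fin I → ℝ)
    (f : T → ℝ) (c : Fin I → T → ℝ)
    -- the functions v and r
    (v : ℝ → (Fin I → ℝ) → Fin I → ℝ)
    (hv : ∀ y ξ i, v y ξ i =
      Real.exp (ξ i - z i * y) / (1 + ∑ j, Real.exp (ξ j - z j * y)))
    (r : ℝ → (Fin I → ℝ) → ℝ)
    (hr : ∀ y ξ, r y ξ = -∑ i, z i * v y ξ i)
    -- the functional Ψ
    (Ψ : (T → ℝ) → (Fin I → ℝ) → ℝ)
    (hΨ : ∀ (y : T → ℝ) (ξ : Fin I → ℝ), Ψ y ξ =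
      lam ^ 2 / 4 * ∑ K, ∑ L, a K L * (y K - y L) ^ 2 +
      lam ^ 2 / 2 * ∑ K, b K * (y K - g K) ^ 2 +
      (∑ K, m K * Real.log (1 + ∑ i, Real.exp (ξ i - z i * y K))) -
      ∑ K, m K * (f K * y K + ∑ i, ξ i * c i K))
    (y : T → ℝ) (ξ : Fin I → ℝ) :
    ((∀ K, HasDerivAt (fun t => Ψ (Function.update y K t) ξ) 0 (y K)) ∧
     (∀ i, HasDerivAt (fun t => Ψ y (Function.update ξ i t)) 0 (ξ i))) ↔
    ((∀ K, lam ^ 2 * ((∑ L, a K L * (y K - y L)) + b K * (y K - g K)) +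
        m K * r (y K) ξ = m K * f K) ∧
     (∀ i, ∑ K, m K * v (y K) ξ i = ∑ K, m K * c i K)) := by
  classical
  -- derivative of coordinate update
  have hu : ∀ (K K' : T), HasDerivAt (fun t => Function.update y K t K')
      (if K' = K then (1:ℝ) else 0) (y K) := by
    intro K K'
    by_cases h : K' = K
    · subst h; simpa using (hasDerivAt_id' (y K'))
    · simp only [if_neg h]
      simpa [Function.update_of_ne h] using hasDerivAt_const (y K) (y K')
  have hw : ∀ (i j : Fin I), HasDerivAt (fun s => Function.update ξ i s j)
      (if j = i then (1:ℝ) else 0) (ξ i) := by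
    intro i j
    by_cases h : j = i
    · subst h; simpa using (hasDerivAt_id' (ξ j))
    · simp only [if_neg h]
      simpa [Function.update_of_ne h] using hasDerivAt_const (ξ i) (ξ j)
  -- the y-direction derivative
  have hDy : ∀ K, HasDerivAt (fun t => Ψ (Function.update y K t) ξ)
      (lam ^ 2 * ((∑ L, a K L * (y K - y L)) + b K * (y K - g K)) +
        m K * r (y K) ξ - m K * f K) (y K) := by
    intro K
    simp only [hΨ]
    have hA : HasDerivAt (fun t => lam ^ 2 / 4 *
        ∑ K', ∑ L, a K' L * (Function.update y K t K' - Function.update y K t L) ^ 2)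
        (lam ^ 2 * ∑ L, a K L * (y K - y L)) (y K) := by
      have hpair : ∀ K' L : T, HasDerivAt
          (fun t => a K' L * (Function.update y K t K' - Function.update y K t L) ^ 2)
          (a K' L * ((2:ℝ) * (y K' - y L) ^ 1 *
            ((if K' = K then (1:ℝ) else 0) - (if L = K then 1 else 0)))) (y K) := by
        intro K' L
        have h1 := (((hu K K').sub (hu K L)).pow 2).const_mul (a K' L)
        convert (config := {transparency := .default, preTransparency := .default}) h1 using 2 <;> simp
      have hsum := (HasDerivAt.fun_sum (u := Finset.univ) (fun K' (_ : K' ∈ Finset.univ) =>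
        HasDerivAt.fun_sum (u := Finset.univ) (fun L (_ : L ∈ Finset.univ) =>
          hpair K' L))).const_mul (lam ^ 2 / 4)
      convert (config := {transparency := .default, preTransparency := .default}) hsum using 1
      -- algebraic identity for the double sum
      have e1 : ∀ K' L : T, a K' L * ((2:ℝ) * (y K' - y L) ^ 1 *
          ((if K' = K then (1:ℝ) else 0) - (if L = K then 1 else 0))) =
          (if K' = K then 2 * a K' L * (y K' - y L) else 0) +
          (if L = K then 2 * a K' L * (y L - y K') else 0) := by
        intro K' L
        by_cases h1 : K' = K <;> by_cases h2 : L = K <;> simp [h1, h2] <;> ring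
      have pull : ∀ (P : Prop) [Decidable P] (F : T → ℝ),
          (∑ L : T, if P then F L else 0) = if P then ∑ L : T, F L else 0 := by
        intro P _ F; split <;> simp
      simp only [e1, Finset.sum_add_distrib]
      rw [Finset.sum_comm (f := fun K' L => if L = K then 2 * a K' L * (y L - y K') else 0)]
      simp only [pull]
      simp only [Finset.sum_ite_eq', Finset.mem_univ, if_true]
      have hswap : ∑ L : T, 2 * a L K * (y K - y L) = ∑ L : T, 2 * a K L * (y K - y L) :=
        Finset.sum_congr rfl fun L _ => by rw [hsym L K]
      have h2 : ∑ L : T, 2 * a K L * (y K - y L) = 2 * ∑ L : T, a K L * (y K - y L) := by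
        rw [Finset.mul_sum]
        exact Finset.sum_congr rfl fun L _ => by ring
      rw [hswap, h2]; ring
    have hB : HasDerivAt (fun t => lam ^ 2 / 2 *
        ∑ K', b K' * (Function.update y K t K' - g K') ^ 2)
        (lam ^ 2 * (b K * (y K - g K))) (y K) := by
      have hterm : ∀ K' : T, HasDerivAt
          (fun t => b K' * (Function.update y K t K' - g K') ^ 2)
          (b K' * ((2:ℝ) * (y K' - g K') ^ 1 * (if K' = K then (1:ℝ) else 0))) (y K) := by
        intro K'
        have h1 := (((hu K K').sub_const (g K')).pow 2).const_mul (b K')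
        convert (config := {transparency := .default, preTransparency := .default}) h1 using 2 <;> simp
      have hsum := (HasDerivAt.fun_sum (u := Finset.univ)
        (fun K' (_ : K' ∈ Finset.univ) => hterm K')).const_mul (lam ^ 2 / 2)
      convert (config := {transparency := .default, preTransparency := .default}) hsum using 1
      simp only [mul_ite, mul_one, mul_zero, Finset.sum_ite_eq' Finset.univ K,
        Finset.mem_univ, if_true]
      ring
    have hC : HasDerivAt (fun t => ∑ K', m K' *
        Real.log (1 + ∑ i, Real.exp (ξ i - z i * Function.update y K t K')))
        (m K * r (y K) ξ) (y K) := by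
      have hterm : ∀ K' : T, HasDerivAt
          (fun t => m K' * Real.log (1 + ∑ i, Real.exp (ξ i - z i * Function.update y K t K')))
          (m K' * ((∑ i, Real.exp (ξ i - z i * y K') *
            -(z i * (if K' = K then (1:ℝ) else 0))) /
            (1 + ∑ i, Real.exp (ξ i - z i * y K')))) (y K) := by
        intro K'
        have hs : HasDerivAt (fun t => 1 + ∑ i, Real.exp (ξ i - z i * Function.update y K t K'))
            (∑ i, Real.exp (ξ i - z i * y K') * -(z i * (if K' = K then (1:ℝ) else 0))) (y K) := by
          have h1 := (HasDerivAt.fun_sum (u := Finset.univ) (fun i (_ : i ∈ Finset.univ) =>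
            ((((hu K K').const_mul (z i)).const_sub (ξ i)).exp))).const_add (1:ℝ)
          convert (config := {transparency := .default, preTransparency := .default}) h1 using 2 <;> simp
        have hpos : (1 + ∑ i, Real.exp (ξ i - z i * y K')) ≠ 0 := by positivity
        have hlog := hs.log (by simpa using hpos)
        have := hlog.const_mul (m K')
        convert (config := {transparency := .default, preTransparency := .default}) this using 2 <;> simp
      have hsum := HasDerivAt.fun_sum (u := Finset.univ)
        (fun K' (_ : K' ∈ Finset.univ) => hterm K')
      convert (config := {transparency := .default, preTransparency := .default}) hsum using 1
      have e2 : ∀ K' : T, m K' * ((∑ i, Real.exp (ξ i - z i * y K') *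
          -(z i * (if K' = K then (1:ℝ) else 0))) /
          (1 + ∑ i, Real.exp (ξ i - z i * y K'))) =
          if K' = K then m K * ((∑ i, Real.exp (ξ i - z i * y K) * -(z i)) /
            (1 + ∑ i, Real.exp (ξ i - z i * y K))) else 0 := by
        intro K'
        by_cases h : K' = K
        · subst h; simp
        · simp [h]
      rw [Finset.sum_congr rfl (fun K' _ => e2 K'), Finset.sum_ite_eq' Finset.univ K]
      simp only [Finset.mem_univ, if_true]
      rw [hr]
      congr 1
      rw [Finset.sum_div, ← Finset.sum_neg_distrib]
      refine Finset.sum_congr rfl fun i _ => ?_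
      rw [hv]; ring
    have hD : HasDerivAt (fun t => ∑ K', m K' *
        (f K' * Function.update y K t K' + ∑ i, ξ i * c i K'))
        (m K * f K) (y K) := by
      have hterm : ∀ K' : T, HasDerivAt
          (fun t => m K' * (f K' * Function.update y K t K' + ∑ i, ξ i * c i K'))
          (m K' * (f K' * (if K' = K then (1:ℝ) else 0))) (y K) := by
        intro K'
        have h1 := (((hu K K').const_mul (f K')).add_const
          (∑ i, ξ i * c i K')).const_mul (m K')
        convert h1 using 2 <;> simp
      have hsum := HasDerivAt.fun_sum (u := Finset.univ)
        (fun K' (_ : K' ∈ Finset.univ) => hterm K')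
      convert (config := {transparency := .default, preTransparency := .default}) hsum using 1
      simp only [mul_ite, mul_one, mul_zero, Finset.sum_ite_eq' Finset.univ K,
        Finset.mem_univ, if_true]
    have total := ((hA.add hB).add hC).sub hD
    convert (config := {transparency := .default, preTransparency := .default}) total using 1
    ring
  -- the ξ-direction derivative
  have hDξ : ∀ i, HasDerivAt (fun s => Ψ y (Function.update ξ i s))
      ((∑ K, m K * v (y K) ξ i) - ∑ K, m K * c i K) (ξ i) := by
    intro i
    simp only [hΨ]
    have hC : HasDerivAt (fun s => ∑ K, m K *
        Real.log (1 + ∑ j, Real.exp (Function.update ξ i s j - z j * y K)))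
        (∑ K, m K * v (y K) ξ i) (ξ i) := by
      have hterm : ∀ K : T, HasDerivAt
          (fun s => m K * Real.log (1 + ∑ j, Real.exp (Function.update ξ i s j - z j * y K)))
          (m K * v (y K) ξ i) (ξ i) := by
        intro K
        have hs : HasDerivAt (fun s => 1 + ∑ j, Real.exp (Function.update ξ i s j - z j * y K))
            (∑ j, Real.exp (ξ j - z j * y K) * (if j = i then (1:ℝ) else 0)) (ξ i) := by
          have h1 := (HasDerivAt.fun_sum (u := Finset.univ) (fun j (_ : j ∈ Finset.univ) =>
            (((hw i j).sub_const (z j * y K)).exp))).const_add (1:ℝ)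
          convert (config := {transparency := .default, preTransparency := .default}) h1 using 2 <;> simp
        have hpos : (1 + ∑ j, Real.exp (ξ j - z j * y K)) ≠ 0 := by positivity
        have hlog := hs.log (by simpa using hpos)
        have h2 := hlog.const_mul (m K)
        have hterm' : HasDerivAt
            (fun s => m K * Real.log (1 + ∑ j, Real.exp (Function.update ξ i s j - z j * y K)))
            (m K * ((∑ j, Real.exp (ξ j - z j * y K) * (if j = i then (1:ℝ) else 0)) /
              (1 + ∑ j, Real.exp (ξ j - z j * y K)))) (ξ i) := by
          convert (config := {transparency := .default, preTransparency := .default}) h2 using 2 <;> simp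
        have hval : m K * ((∑ j, Real.exp (ξ j - z j * y K) * (if j = i then (1:ℝ) else 0)) /
            (1 + ∑ j, Real.exp (ξ j - z j * y K))) = m K * v (y K) ξ i := by
          rw [hv]
          congr 1
          simp [mul_ite, mul_one, mul_zero, Finset.sum_ite_eq']
        exact hval ▸ hterm'
      exact HasDerivAt.fun_sum (u := Finset.univ) (fun K (_ : K ∈ Finset.univ) => hterm K)
    have hD : HasDerivAt (fun s => ∑ K, m K *
        (f K * y K + ∑ j, Function.update ξ i s j * c j K))
        (∑ K, m K * c i K) (ξ i) := by
      have hterm : ∀ K : T, HasDerivAt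
          (fun s => m K * (f K * y K + ∑ j, Function.update ξ i s j * c j K))
          (m K * c i K) (ξ i) := by
        intro K
        have hs : HasDerivAt (fun s => ∑ j, Function.update ξ i s j * c j K)
            (∑ j, (if j = i then (1:ℝ) else 0) * c j K) (ξ i) :=
          HasDerivAt.fun_sum (u := Finset.univ) (fun j (_ : j ∈ Finset.univ) =>
            ((hw i j).mul_const (c j K)))
        have h1 := (hs.const_add (f K * y K)).const_mul (m K)
        convert (config := {transparency := .default, preTransparency := .default}) h1 using 2
        simp [ite_mul, one_mul, zero_mul, Finset.sum_ite_eq' Finset.univ i]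
      exact HasDerivAt.fun_sum (u := Finset.univ) (fun K (_ : K ∈ Finset.univ) => hterm K)
    have hAB : HasDerivAt (fun _ : ℝ =>
        lam ^ 2 / 4 * ∑ K, ∑ L, a K L * (y K - y L) ^ 2 +
        lam ^ 2 / 2 * ∑ K, b K * (y K - g K) ^ 2) 0 (ξ i) := hasDerivAt_const _ _
    have total := (hAB.add hC).sub hD
    convert (config := {transparency := .default, preTransparency := .default}) total using 1
    ring
  constructor
  · rintro ⟨h1, h2⟩
    constructor
    · intro K
      have := (hDy K).unique (h1 K)
      linarith
    · intro i
      have := (hDξ i).unique (h2 i)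
      linarith
  · rintro ⟨h1, h2⟩
    constructor
    · intro K
      have e : lam ^ 2 * ((∑ L, a K L * (y K - y L)) + b K * (y K - g K)) +
          m K * r (y K) ξ - m K * f K = 0 := by
        rw [h1 K]; ring
      exact e ▸ hDy K
    · intro i
      have e : (∑ K, m K * v (y K) ξ i) - ∑ K, m K * c i K = 0 := by
        rw [h2 i]; ring
      exact e ▸ hDξ i
end
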